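/- arXiv:2507.05877 — 5 statements merged into one kernel-verified Lean document; each statement's English description precedes it below -/
import Mathlib

section
/- Let c be a positive integer and let i be an integer with −c ≤ i ≤ c−1. Then lim_{a→∞} Pr[X_{2a} − a = i | X_{2a} − a ∈ {−c, −c+1, …, c−1}] = 1/(2c). -/
open Filter


lemma nat_ratio (k : ℕ) :
    Tendsto (fun a : ℕ => ((2*a).choose (a+k) : ℝ) / ((2*a).choose a)) atTop (nhds 1) := by
  induction k with
  | zero =>
    have : (fun a : ℕ => ((2*a).choose (a+0) : ℝ) / ((2*a).choose a)) = fun _ => (1:ℝ) := by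
      funext a
      have : ((2*a).choose a : ℝ) ≠ 0 := by
        exact_mod_cast (Nat.choose_pos (by omega)).ne'
      simp [div_self this]
    rw [this]; exact tendsto_const_nhds
  | succ k ih =>
    have h1 : Tendsto (fun a : ℕ => ((a:ℝ) - k) / ((a:ℝ) + k + 1)) atTop (nhds 1) := by
      have h2 : Tendsto (fun a : ℕ => ((a:ℝ) + k + 1)) atTop atTop := by
        apply tendsto_atTop_add_const_right
        apply tendsto_atTop_add_const_right
        exact tendsto_natCast_atTop_atTop
      have h3 : Tendsto (fun a : ℕ => (2*(k:ℝ)+1) / ((a:ℝ) + k + 1)) atTop (nhds 0) := by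
        simpa [div_eq_mul_inv] using (h2.inv_tendsto_atTop).const_mul (2*(k:ℝ)+1)
      have h4 := (tendsto_const_nhds (x := (1:ℝ)) (f := atTop)).sub h3
      rw [sub_zero] at h4
      refine h4.congr' ?_
      filter_upwards [eventually_gt_atTop 0] with a ha
      have hne : ((a:ℝ) + k + 1) ≠ 0 := by positivity
      field_simp
      ring
    have key : ∀ᶠ a : ℕ in atTop,
        ((2*a).choose (a+(k+1)) : ℝ) / ((2*a).choose a)
          = (((2*a).choose (a+k) : ℝ) / ((2*a).choose a)) * (((a:ℝ) - k) / ((a:ℝ) + k + 1)) := by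
      filter_upwards [eventually_ge_atTop (k+1)] with a ha
      have hidx : a+(k+1) = a+k+1 := by omega
      rw [hidx]
      have hrec := Nat.choose_succ_right_eq (2*a) (a+k)
      have hsub : 2*a - (a+k) = a - k := by omega
      rw [hsub] at hrec
      have hcast : (((2*a).choose (a+k+1) : ℝ)) * ((a:ℝ) + k + 1)
          = ((2*a).choose (a+k) : ℝ) * ((a:ℝ) - k) := by
        have := congrArg (fun n : ℕ => (n : ℝ)) hrec
        push_cast [Nat.cast_sub (by omega : k ≤ a)] at this
        convert this using 2 <;> push_cast <;> ring
      have hne : ((a:ℝ) + k + 1) ≠ 0 := by positivity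
      have : ((2*a).choose (a+k+1) : ℝ) = ((2*a).choose (a+k) : ℝ) * (((a:ℝ) - k)/((a:ℝ)+k+1)) := by
        field_simp
        linarith [hcast]
      rw [this]; ring
    have := (ih.mul h1)
    rw [mul_one] at this
    exact this.congr' (EventuallyEq.symm key)

lemma int_ratio (i : ℤ) :
    Tendsto (fun a : ℕ => ((2*a).choose ((a:ℤ)+i).toNat : ℝ) / ((2*a).choose a)) atTop (nhds 1) := by
  have := nat_ratio i.natAbs
  refine this.congr' ?_
  filter_upwards [eventually_ge_atTop i.natAbs] with a ha
  rcases le_or_gt 0 i with h | h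
  · congr 3
    omega
  · have h1 : ((a:ℤ)+i).toNat = a - i.natAbs := by omega
    rw [h1]
    have h2 : (2*a).choose (a - i.natAbs) = (2*a).choose (a + i.natAbs) := by
      rw [show a - i.natAbs = 2*a - (a + i.natAbs) by omega]
      exact Nat.choose_symm (by omega)
    rw [h2]

/-- For a positive integer `c` and an integer `i` with `-c ≤ i ≤ c-1`,
the conditional probability `Pr[X_{2a} - a = i ∣ X_{2a} - a ∈ [-c, c-1]]` tends to `1/(2c)`
as `a → ∞`, where `X_{2a}` is binomial with `2a` trials and success probability `1/2`,
i.e. `Pr[X_{2a} = h] = C(2a, h) · 2^{-2a}`. -/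
theorem stmt_0 (c : ℕ) (hc : 0 < c) (i : ℤ) (hi₁ : -(c : ℤ) ≤ i) (hi₂ : i ≤ (c : ℤ) - 1) :
    Tendsto (fun a : ℕ =>
        ((Nat.choose (2 * a) ((a : ℤ) + i).toNat : ℝ) / (2 : ℝ) ^ (2 * a)) /
          (∑ j ∈ Finset.Icc (-(c : ℤ)) ((c : ℤ) - 1),
            (Nat.choose (2 * a) ((a : ℤ) + j).toNat : ℝ) / (2 : ℝ) ^ (2 * a)))
      atTop (nhds (1 / (2 * (c : ℝ)))) := by
  have h2c : (2 * (c:ℝ)) ≠ 0 := by positivity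
  have hsum : Tendsto (fun a : ℕ => ∑ j ∈ Finset.Icc (-(c:ℤ)) ((c:ℤ)-1),
      ((2*a).choose ((a:ℤ)+j).toNat : ℝ) / ((2*a).choose a)) atTop (nhds (2*(c:ℝ))) := by
    have h := tendsto_finset_sum (Finset.Icc (-(c:ℤ)) ((c:ℤ)-1))
      (fun j _ => int_ratio j)
    have hcard : ((Finset.Icc (-(c:ℤ)) ((c:ℤ)-1)).card : ℝ) = 2*(c:ℝ) := by
      rw [Int.card_Icc]
      have : ((c:ℤ) - 1 + 1 - (-(c:ℤ))).toNat = 2*c := by omega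
      rw [this]; push_cast; ring
    have hone : (∑ _j ∈ Finset.Icc (-(c:ℤ)) ((c:ℤ)-1), (1:ℝ)) = 2*(c:ℝ) := by
      rw [Finset.sum_const, nsmul_eq_mul, hcard, mul_one]
    rw [← hone]
    exact h
  have hmain := (int_ratio i).div hsum h2c
  refine hmain.congr fun a => ?_
  simp only [Pi.div_apply]
  have hC : ((2*a).choose a : ℝ) ≠ 0 := by
    exact_mod_cast (Nat.choose_pos (by omega)).ne'
  have hP : ((2:ℝ) ^ (2*a)) ≠ 0 := by positivity
  have key : ∀ g : ℝ, g ≠ 0 →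
      (((2*a).choose ((a:ℤ)+i).toNat : ℝ)/g) /
        (∑ j ∈ Finset.Icc (-(c:ℤ)) ((c:ℤ)-1), ((2*a).choose ((a:ℤ)+j).toNat : ℝ)/g)
      = ((2*a).choose ((a:ℤ)+i).toNat : ℝ) /
        (∑ j ∈ Finset.Icc (-(c:ℤ)) ((c:ℤ)-1), ((2*a).choose ((a:ℤ)+j).toNat : ℝ)) := by
    intro g hg
    rw [← Finset.sum_div]
    set x := ((2*a).choose ((a:ℤ)+i).toNat : ℝ)
    set y := (∑ j ∈ Finset.Icc (-(c:ℤ)) ((c:ℤ)-1), ((2*a).choose ((a:ℤ)+j).toNat : ℝ))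
    rcases eq_or_ne y 0 with hy | hy
    · simp [hy]
    · field_simp
  rw [key _ hC, key _ hP]
end

section
/- Let V*, V ⊆ [n] with |V| ≥ |V*|. Then V ⪰ V* if and only if there exist an injection ℓ : V* → V with ℓ(v) ≤ v for all v ∈ V* and an injection r : V* → V with r(v) ≥ v for all v ∈ V*. Moreover, left dominance alone is equivalent to the existence of such an injection ℓ, and right dominance alone is equivalent to the existence of such an injection r. -/
open Finset

lemma left_dom (n : ℕ) (V Vs : Finset (Fin n)) :
    (∀ h ∈ Finset.Icc 1 n,
        (Vs.filter fun i : Fin n => (i : ℕ) < h).card ≤ (V.filter fun i : Fin n => (i : ℕ) < h).card) ↔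
      ∃ l : Fin n → Fin n, Set.InjOn l (Vs : Set (Fin n)) ∧ ∀ v ∈ Vs, l v ∈ V ∧ l v ≤ v := by
  constructor
  · intro hdom
    classical
    have hall : ∀ s : Finset {x // x ∈ Vs},
        s.card ≤ (s.biUnion fun v => V.filter fun i => i ≤ v.1).card := by
      intro s
      rcases s.eq_empty_or_nonempty with rfl | hs
      · simp
      have hne : (s.image Subtype.val).Nonempty := hs.image _
      set m := (s.image Subtype.val).max' hne with hm
      have hmmem : m ∈ s.image Subtype.val := (s.image Subtype.val).max'_mem hne
      have h1 : s.card = (s.image Subtype.val).card :=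
        (Finset.card_image_of_injective s Subtype.val_injective).symm
      have h2 : s.image Subtype.val ⊆ Vs.filter fun i : Fin n => (i : ℕ) < (m : ℕ) + 1 := by
        intro x hx
        simp only [Finset.mem_filter]
        refine ⟨?_, ?_⟩
        · rcases Finset.mem_image.mp hx with ⟨y, _, rfl⟩; exact y.2
        · exact Nat.lt_succ_of_le (Finset.le_max' _ _ hx)
      have h3 : (Vs.filter fun i : Fin n => (i : ℕ) < (m : ℕ) + 1).card ≤
          (V.filter fun i : Fin n => (i : ℕ) < (m : ℕ) + 1).card := by
        apply hdom
        simp only [Finset.mem_Icc]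
        exact ⟨Nat.succ_le_succ (Nat.zero_le _), m.isLt⟩
      have h4 : (V.filter fun i : Fin n => (i : ℕ) < (m : ℕ) + 1) ⊆
          s.biUnion fun v => V.filter fun i => i ≤ v.1 := by
        intro x hx
        rcases Finset.mem_image.mp hmmem with ⟨vm, hvm, hvme⟩
        apply Finset.mem_biUnion.mpr ⟨vm, hvm, ?_⟩
        simp only [Finset.mem_filter] at hx ⊢
        refine ⟨hx.1, ?_⟩
        rw [hvme]
        exact Fin.le_def.mpr (Nat.lt_succ_iff.mp hx.2)
      calc s.card = (s.image Subtype.val).card := h1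
        _ ≤ _ := Finset.card_le_card h2
        _ ≤ _ := h3
        _ ≤ _ := Finset.card_le_card h4
    obtain ⟨f, hinj, hf⟩ :=
      (Finset.all_card_le_biUnion_card_iff_exists_injective
        (fun v : {x // x ∈ Vs} => V.filter fun i => i ≤ v.1)).mp hall
    refine ⟨fun x => if h : x ∈ Vs then f ⟨x, h⟩ else x, ?_, ?_⟩
    · intro a ha b hb hab
      simp only [Finset.mem_coe] at ha hb
      simp only [dif_pos ha, dif_pos hb] at hab
      exact Subtype.ext_iff.mp (hinj hab)
    · intro v hv
      simp only [dif_pos hv]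
      have := hf ⟨v, hv⟩
      simp only [Finset.mem_filter] at this
      exact this
  · rintro ⟨l, hinj, hl⟩ h _
    apply Finset.card_le_card_of_injOn l
    · intro x hx
      simp only [Finset.mem_coe, Finset.mem_filter] at hx ⊢
      exact ⟨(hl x hx.1).1, lt_of_le_of_lt (hl x hx.1).2 hx.2⟩
    · refine hinj.mono ?_
      intro x hx
      simp only [Finset.coe_filter, Set.mem_setOf_eq] at hx
      exact hx.1

lemma right_dom (n : ℕ) (V Vs : Finset (Fin n)) :
    (∀ h ∈ Finset.Icc 1 n,
        (Vs.filter fun i : Fin n => n - h ≤ (i : ℕ)).card ≤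
          (V.filter fun i : Fin n => n - h ≤ (i : ℕ)).card) ↔
      ∃ r : Fin n → Fin n, Set.InjOn r (Vs : Set (Fin n)) ∧ ∀ v ∈ Vs, r v ∈ V ∧ v ≤ r v := by
  constructor
  · intro hdom
    classical
    have hall : ∀ s : Finset {x // x ∈ Vs},
        s.card ≤ (s.biUnion fun v => V.filter fun i => v.1 ≤ i).card := by
      intro s
      rcases s.eq_empty_or_nonempty with rfl | hs
      · simp
      have hne : (s.image Subtype.val).Nonempty := hs.image _
      set m := (s.image Subtype.val).min' hne with hm
      have hmmem : m ∈ s.image Subtype.val := (s.image Subtype.val).min'_mem hne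
      have h1 : s.card = (s.image Subtype.val).card :=
        (Finset.card_image_of_injective s Subtype.val_injective).symm
      have hiff : ∀ i : Fin n, (n - (n - (m : ℕ)) ≤ (i : ℕ)) ↔ (m : ℕ) ≤ (i : ℕ) := by
        intro i
        have := m.isLt
        omega
      have h2 : s.image Subtype.val ⊆ Vs.filter fun i : Fin n => n - (n - (m : ℕ)) ≤ (i : ℕ) := by
        intro x hx
        simp only [Finset.mem_filter, hiff]
        refine ⟨?_, Finset.min'_le _ _ hx⟩
        rcases Finset.mem_image.mp hx with ⟨y, _, rfl⟩; exact y.2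
      have h3 : (Vs.filter fun i : Fin n => n - (n - (m : ℕ)) ≤ (i : ℕ)).card ≤
          (V.filter fun i : Fin n => n - (n - (m : ℕ)) ≤ (i : ℕ)).card := by
        apply hdom
        have := m.isLt
        simp only [Finset.mem_Icc]
        omega
      have h4 : (V.filter fun i : Fin n => n - (n - (m : ℕ)) ≤ (i : ℕ)) ⊆
          s.biUnion fun v => V.filter fun i => v.1 ≤ i := by
        intro x hx
        rcases Finset.mem_image.mp hmmem with ⟨vm, hvm, hvme⟩
        apply Finset.mem_biUnion.mpr ⟨vm, hvm, ?_⟩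
        simp only [Finset.mem_filter, hiff] at hx ⊢
        refine ⟨hx.1, ?_⟩
        rw [hvme]
        exact Fin.le_def.mpr hx.2
      calc s.card = (s.image Subtype.val).card := h1
        _ ≤ _ := Finset.card_le_card h2
        _ ≤ _ := h3
        _ ≤ _ := Finset.card_le_card h4
    obtain ⟨f, hinj, hf⟩ :=
      (Finset.all_card_le_biUnion_card_iff_exists_injective
        (fun v : {x // x ∈ Vs} => V.filter fun i => v.1 ≤ i)).mp hall
    refine ⟨fun x => if h : x ∈ Vs then f ⟨x, h⟩ else x, ?_, ?_⟩
    · intro a ha b hb hab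
      simp only [Finset.mem_coe] at ha hb
      simp only [dif_pos ha, dif_pos hb] at hab
      exact Subtype.ext_iff.mp (hinj hab)
    · intro v hv
      simp only [dif_pos hv]
      have := hf ⟨v, hv⟩
      simp only [Finset.mem_filter] at this
      exact this
  · rintro ⟨r, hinj, hr⟩ h hh
    apply Finset.card_le_card_of_injOn r
    · intro x hx
      simp only [Finset.mem_coe, Finset.mem_filter] at hx ⊢
      exact ⟨(hr x hx.1).1, le_trans hx.2 (hr x hx.1).2⟩
    · refine hinj.mono ?_
      intro x hx
      simp only [Finset.coe_filter, Set.mem_setOf_eq] at hx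
      exact hx.1

/-- Let `V*, V ⊆ [n]` with `|V| ≥ |V*|` (elements of `[n] = {1,…,n}` are
represented by `Fin n`, so `[h]` corresponds to `{i : (i:ℕ) < h}` and `[−h]` to
`{i : n − h ≤ (i:ℕ)}`). Then left dominance holds iff there is an injection
`ℓ : V* → V` with `ℓ(v) ≤ v`, right dominance holds iff there is an injection `r : V* → V`
with `r(v) ≥ v`, and `V ⪰ V*` iff both such injections exist. -/
theorem stmt_6 (n : ℕ) (V Vs : Finset (Fin n)) (hcard : Vs.card ≤ V.card) :
    ((∀ h ∈ Finset.Icc 1 n,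
        (Vs.filter fun i : Fin n => (i : ℕ) < h).card ≤ (V.filter fun i : Fin n => (i : ℕ) < h).card) ↔
      ∃ l : Fin n → Fin n, Set.InjOn l (Vs : Set (Fin n)) ∧ ∀ v ∈ Vs, l v ∈ V ∧ l v ≤ v) ∧
    ((∀ h ∈ Finset.Icc 1 n,
        (Vs.filter fun i : Fin n => n - h ≤ (i : ℕ)).card ≤
          (V.filter fun i : Fin n => n - h ≤ (i : ℕ)).card) ↔
      ∃ r : Fin n → Fin n, Set.InjOn r (Vs : Set (Fin n)) ∧ ∀ v ∈ Vs, r v ∈ V ∧ v ≤ r v) ∧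
    ((∀ h ∈ Finset.Icc 1 n,
        (Vs.filter fun i : Fin n => (i : ℕ) < h).card ≤ (V.filter fun i : Fin n => (i : ℕ) < h).card ∧
        (Vs.filter fun i : Fin n => n - h ≤ (i : ℕ)).card ≤
          (V.filter fun i : Fin n => n - h ≤ (i : ℕ)).card) ↔
      ((∃ l : Fin n → Fin n, Set.InjOn l (Vs : Set (Fin n)) ∧ ∀ v ∈ Vs, l v ∈ V ∧ l v ≤ v) ∧
       (∃ r : Fin n → Fin n, Set.InjOn r (Vs : Set (Fin n)) ∧
          ∀ v ∈ Vs, r v ∈ V ∧ v ≤ r v))) := by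
  refine ⟨left_dom n V Vs, right_dom n V Vs, ?_⟩
  constructor
  · intro h
    exact ⟨(left_dom n V Vs).mp fun k hk => (h k hk).1,
      (right_dom n V Vs).mp fun k hk => (h k hk).2⟩
  · rintro ⟨hl, hr⟩ k hk
    exact ⟨(left_dom n V Vs).mpr hl k hk, (right_dom n V Vs).mpr hr k hk⟩
end

section
/- Let p ∈ (0,1)^n with p_1 ≤ p_2 ≤ … ≤ p_n and let x_1,…,x_n be independent Boolean random variables with Pr[x_i = 1] = p_i. Let V, V* ⊆ [n] with V ⪰ V*. Then for every ℓ ∈ [|V*|]: Pr[Σ_{i∈V} x_i ≥ ℓ] ≥ Pr[Σ_{i∈V*} x_i ≥ ℓ] and Pr[Σ_{i∈V} (1−x_i) ≥ ℓ] ≥ Pr[Σ_{i∈V*} (1−x_i) ≥ ℓ]. -/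
set_option linter.unusedSectionVars false

open Finset

open Classical in
/-- `Pr[P]` with respect to the product measure on `{0,1}^n` where `Pr[x_i = 1] = p_i`. -/
noncomputable def pr {n : ℕ} (p : Fin n → ℝ) (P : (Fin n → Bool) → Prop) : ℝ :=
  ∑ x : Fin n → Bool, if P x then (∏ i, if x i then p i else 1 - p i) else 0

/-! ### The tail probability function `T` -/

/-- Tail probability: at least `ℓ` successes among independent Bernoullis with success probs `l`. -/
noncomputable def T : List ℝ → ℕ → ℝ
  | _, 0 => 1
  | [], _ + 1 => 0
  | a :: l, ℓ + 1 => a * T l ℓ + (1 - a) * T l (ℓ + 1)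

lemma T_zero (l : List ℝ) : T l 0 = 1 := by cases l <;> rfl

lemma T_nil (ℓ : ℕ) : T [] (ℓ + 1) = 0 := rfl

lemma T_cons (a : ℝ) (l : List ℝ) (ℓ : ℕ) :
    T (a :: l) (ℓ + 1) = a * T l ℓ + (1 - a) * T l (ℓ + 1) := rfl

def Ok (l : List ℝ) : Prop := ∀ x ∈ l, 0 ≤ x ∧ x ≤ 1

lemma T_nonneg {l : List ℝ} (h : Ok l) : ∀ ℓ, 0 ≤ T l ℓ := by
  induction l with
  | nil => intro ℓ; cases ℓ <;> simp [T_zero, T_nil]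
  | cons a l ih =>
    intro ℓ
    cases ℓ with
    | zero => simp [T_zero]
    | succ m =>
      have ha := h a (by simp)
      have hl : Ok l := fun x hx => h x (by simp [hx])
      have h1 := ih hl m
      have h2 := ih hl (m + 1)
      rw [T_cons]
      nlinarith [ha.1, ha.2]

lemma T_le_one {l : List ℝ} (h : Ok l) : ∀ ℓ, T l ℓ ≤ 1 := by
  induction l with
  | nil => intro ℓ; cases ℓ <;> simp [T_zero, T_nil]
  | cons a l ih =>
    intro ℓ
    cases ℓ with
    | zero => simp [T_zero]
    | succ m =>
      have ha := h a (by simp)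
      have hl : Ok l := fun x hx => h x (by simp [hx])
      have h1 := ih hl m
      have h2 := ih hl (m + 1)
      rw [T_cons]
      nlinarith [ha.1, ha.2]

lemma T_succ_le {l : List ℝ} (h : Ok l) : ∀ ℓ, T l (ℓ + 1) ≤ T l ℓ := by
  induction l with
  | nil => intro ℓ; cases ℓ <;> simp [T_zero, T_nil]
  | cons a l ih =>
    intro ℓ
    cases ℓ with
    | zero =>
      rw [T_zero]; exact T_le_one h 1
    | succ m =>
      have ha := h a (by simp)
      have hl : Ok l := fun x hx => h x (by simp [hx])
      have h1 := ih hl m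
      have h2 := ih hl (m + 1)
      rw [T_cons, T_cons]
      nlinarith [ha.1, ha.2]

lemma T_cons_ge {a : ℝ} {l : List ℝ} (ha : 0 ≤ a) (h : Ok l) (ℓ : ℕ) :
    T l ℓ ≤ T (a :: l) ℓ := by
  cases ℓ with
  | zero => simp [T_zero]
  | succ m =>
    rw [T_cons]
    nlinarith [T_succ_le h m]

lemma T_swap (a b : ℝ) (l : List ℝ) : ∀ ℓ, T (a :: b :: l) ℓ = T (b :: a :: l) ℓ := by
  intro ℓ
  match ℓ with
  | 0 => simp [T_zero]
  | 1 => simp [T_cons, T_zero]; ring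
  | (m + 2) => simp [T_cons]; ring

lemma T_perm {l₁ l₂ : List ℝ} (h : l₁.Perm l₂) : ∀ ℓ, T l₁ ℓ = T l₂ ℓ := by
  induction h with
  | nil => intro ℓ; rfl
  | cons a h ih =>
    intro ℓ
    cases ℓ with
    | zero => simp [T_zero]
    | succ m => rw [T_cons, T_cons, ih m, ih (m + 1)]
  | swap a b l => exact fun ℓ => T_swap b a l ℓ
  | trans h₁ h₂ ih₁ ih₂ => exact fun ℓ => (ih₁ ℓ).trans (ih₂ ℓ)

lemma T_mono {l₁ l₂ : List ℝ} (h12 : List.Forall₂ (· ≤ ·) l₁ l₂) (h1 : Ok l₁) (h2 : Ok l₂) :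
    ∀ ℓ, T l₁ ℓ ≤ T l₂ ℓ := by
  induction h12 with
  | nil => intro ℓ; exact le_refl _
  | @cons a b l₁' l₂' hab h ih =>
    intro ℓ
    cases ℓ with
    | zero => simp [T_zero]
    | succ m =>
      have ha := h1 a (by simp)
      have hb := h2 b (by simp)
      have hl1 : Ok l₁' := fun x hx => h1 x (by simp [hx])
      have hl2 : Ok l₂' := fun x hx => h2 x (by simp [hx])
      have i1 := ih hl1 hl2 m
      have i2 := ih hl1 hl2 (m + 1)
      have i3 := T_succ_le hl2 m
      rw [T_cons, T_cons]
      nlinarith [ha.1, ha.2, hb.1, hb.2, T_nonneg hl2 m, T_nonneg hl2 (m+1)]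

lemma T_append_left {l r : List ℝ} (hl : Ok l) (hr : Ok r) (ℓ : ℕ) :
    T r ℓ ≤ T (l ++ r) ℓ := by
  induction l with
  | nil => simp
  | cons a l ih =>
    have ha := hl a (by simp)
    have hl' : Ok l := fun x hx => hl x (by simp [hx])
    have hlr : Ok (l ++ r) := by
      intro x hx
      rcases List.mem_append.mp hx with h | h
      · exact hl' x h
      · exact hr x h
    exact (ih hl').trans (T_cons_ge ha.1 hlr ℓ)

lemma T_append_right {l r : List ℝ} (hl : Ok l) (hr : Ok r) (ℓ : ℕ) :
    T l ℓ ≤ T (l ++ r) ℓ := by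
  calc T l ℓ ≤ T (r ++ l) ℓ := T_append_left hr hl ℓ
    _ = T (l ++ r) ℓ := T_perm (List.perm_append_comm) ℓ

/-! ### Basic properties of `pr` -/

lemma pr_true {n : ℕ} (p : Fin n → ℝ) {P : (Fin n → Bool) → Prop} (h : ∀ x, P x) :
    pr p P = 1 := by
  classical
  unfold pr
  have key := Finset.prod_univ_sum (fun _ : Fin n => (Finset.univ : Finset Bool))
    (fun i b => if b = true then p i else 1 - p i)
  have : ∀ x : Fin n → Bool, (if P x then (∏ i, if x i then p i else 1 - p i) else 0)
      = ∏ i, (if x i = true then p i else 1 - p i) := fun x => by simp [h x]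
  rw [Finset.sum_congr rfl fun x _ => this x]
  rw [← Fintype.piFinset_univ, ← key]
  simp

lemma pr_false {n : ℕ} (p : Fin n → ℝ) {P : (Fin n → Bool) → Prop} (h : ∀ x, ¬ P x) :
    pr p P = 0 := by
  unfold pr
  exact Finset.sum_eq_zero fun x _ => by classical simp [h x]

lemma update_self' {n : ℕ} (a : Fin n) (x : Fin n → Bool) (b : Bool) (h : x a = b) :
    Function.update x a b = x := by rw [← h, Function.update_eq_self]

lemma sum_split {n : ℕ} (a : Fin n) (g : (Fin n → Bool) → ℝ) :
    ∑ x : Fin n → Bool, g x =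
      ∑ x ∈ Finset.univ.filter (fun x : Fin n → Bool => x a = false),
        (g x + g (Function.update x a true)) := by
  classical
  rw [Finset.sum_add_distrib]
  rw [← Finset.sum_filter_add_sum_filter_not Finset.univ (fun x : Fin n → Bool => x a = false) g]
  congr 1
  apply Finset.sum_bij' (i := fun (x : Fin n → Bool) _ => Function.update x a false)
    (j := fun (x : Fin n → Bool) _ => Function.update x a true)
  · intro x hx
    simp [Finset.mem_filter]
  · intro x hx
    simp [Finset.mem_filter] at hx ⊢
  · intro x hx
    simp [Finset.mem_filter] at hx
    rw [Function.update_idem]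
    exact update_self' a x true hx
  · intro x hx
    simp [Finset.mem_filter] at hx
    rw [Function.update_idem]
    exact update_self' a x false hx
  · intro x hx
    simp [Finset.mem_filter] at hx
    rw [Function.update_idem]
    rw [update_self' a x true hx]

lemma weight_split {n : ℕ} (p : Fin n → ℝ) (a : Fin n) (x : Fin n → Bool) :
    (∏ i, if x i then p i else 1 - p i) =
      (if x a then p a else 1 - p a) *
        ∏ i ∈ Finset.univ.erase a, (if x i then p i else 1 - p i) := by
  classical
  exact (Finset.mul_prod_erase _ _ (Finset.mem_univ a)).symm

lemma weight_update {n : ℕ} (p : Fin n → ℝ) (a : Fin n) (x : Fin n → Bool) (b : Bool) :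
    (∏ i, if Function.update x a b i then p i else 1 - p i) =
      (if b then p a else 1 - p a) *
        ∏ i ∈ Finset.univ.erase a, (if x i then p i else 1 - p i) := by
  classical
  rw [weight_split p a]
  simp only [Function.update_self]
  congr 1
  apply Finset.prod_congr rfl
  intro i hi
  rw [Function.update_of_ne (Finset.ne_of_mem_erase hi)]

lemma count_update {n : ℕ} (S : Finset (Fin n)) (a : Fin n) (ha : a ∉ S)
    (x : Fin n → Bool) (b c : Bool) :
    (S.filter fun i => Function.update x a c i = b).card = (S.filter fun i => x i = b).card := by
  classical
  congr 1
  apply Finset.filter_congr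
  intro i hi
  rw [Function.update_of_ne (by rintro rfl; exact ha hi)]

lemma count_insert {n : ℕ} (S : Finset (Fin n)) (a : Fin n) (ha : a ∉ S)
    (x : Fin n → Bool) (b : Bool) :
    ((insert a S).filter fun i => x i = b).card =
      (S.filter fun i => x i = b).card + (if x a = b then 1 else 0) := by
  classical
  rw [Finset.filter_insert]
  by_cases h : x a = b
  · rw [if_pos h, if_pos h, Finset.card_insert_of_notMem (by simp [ha])]
  · rw [if_neg h, if_neg h, add_zero]

lemma pr_insert {n : ℕ} (p : Fin n → ℝ) (S : Finset (Fin n)) (a : Fin n) (ha : a ∉ S)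
    (b : Bool) (m : ℕ) :
    pr p (fun x => m + 1 ≤ ((insert a S).filter fun i => x i = b).card) =
      (if b then p a else 1 - p a) *
          pr p (fun x => m ≤ (S.filter fun i => x i = b).card) +
        (1 - (if b then p a else 1 - p a)) *
          pr p (fun x => m + 1 ≤ (S.filter fun i => x i = b).card) := by
  classical
  unfold pr
  rw [sum_split a, sum_split a, sum_split a, Finset.mul_sum, Finset.mul_sum,
    ← Finset.sum_add_distrib]
  apply Finset.sum_congr rfl
  intro x hx
  simp only [Finset.mem_filter, Finset.mem_univ, true_and] at hx
  have hw : (∏ i, if x i then p i else 1 - p i) =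
      (1 - p a) * ∏ i ∈ Finset.univ.erase a, (if x i then p i else 1 - p i) := by
    rw [weight_split p a x, hx]; simp
  have hwu := weight_update p a x true
  rw [if_pos rfl] at hwu
  have hcu := count_update S a ha x b true
  have hci := count_insert S a ha x b
  have hciu := count_insert S a ha (Function.update x a true) b
  rw [hcu] at hciu
  rw [Function.update_self] at hciu
  set c := (S.filter fun i => x i = b).card with hc
  set R := ∏ i ∈ Finset.univ.erase a, (if x i then p i else 1 - p i) with hR
  cases b with
  | true =>
    rw [hx] at hci
    norm_num at hci hciu
    simp only [hci, hciu, hcu, hw, hwu, if_true, Nat.add_le_add_iff_right, reduceIte,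
      Bool.false_eq_true, Bool.true_eq_false, if_false, ← hc]
    by_cases h1 : m ≤ c
    · by_cases h2 : m + 1 ≤ c
      · simp only [if_pos h1, if_pos h2]
        ring
      · simp only [if_pos h1, if_neg h2]
        ring
    · have h2 : ¬ (m + 1 ≤ c) := fun h => h1 (Nat.le_of_succ_le h)
      simp only [if_neg h1, if_neg h2]
      ring
  | false =>
    rw [hx] at hci
    norm_num at hci hciu
    simp only [hci, hciu, hcu, hw, hwu, if_true, Nat.add_le_add_iff_right, reduceIte,
      Bool.false_eq_true, Bool.true_eq_false, if_false, ← hc]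
    by_cases h1 : m ≤ c
    · by_cases h2 : m + 1 ≤ c
      · simp only [if_pos h1, if_pos h2]
        ring
      · simp only [if_pos h1, if_neg h2]
        ring
    · have h2 : ¬ (m + 1 ≤ c) := fun h => h1 (Nat.le_of_succ_le h)
      simp only [if_neg h1, if_neg h2]
      ring

lemma pr_eq_T {n : ℕ} (p : Fin n → ℝ) (b : Bool) (S : Finset (Fin n)) :
    ∀ ℓ, pr p (fun x => ℓ ≤ (S.filter fun i => x i = b).card) =
      T (S.toList.map fun i => if b then p i else 1 - p i) ℓ := by
  classical
  induction S using Finset.induction_on with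
  | empty =>
    intro ℓ
    cases ℓ with
    | zero =>
      simp only [Finset.toList_empty, List.map_nil, T_zero]
      exact pr_true p (fun x => Nat.zero_le _)
    | succ m =>
      simp only [Finset.toList_empty, List.map_nil, T_nil]
      exact pr_false p (fun x => by simp)
  | @insert a S ha ih =>
    intro ℓ
    have hperm : ((insert a S).toList.map fun i => if b then p i else 1 - p i).Perm
        ((a :: S.toList).map fun i => if b then p i else 1 - p i) :=
      (Finset.toList_insert ha).map _
    rw [T_perm hperm ℓ]
    cases ℓ with
    | zero =>
      rw [T_zero]
      exact pr_true p (fun x => Nat.zero_le _)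
    | succ m =>
      rw [pr_insert p S a ha b m, ih m, ih (m + 1)]
      simp only [List.map_cons, T_cons]

/-! ### Counting lemmas for sorted lists -/

section ListCount
variable {α : Type*} [LinearOrder α] [DecidableEq α]

lemma card_filter_eq_length_filter (S : Finset α) (P : α → Prop) [DecidablePred P] :
    (S.filter P).card = ((S.sort (· ≤ ·)).filter (fun x => decide (P x))).length := by
  classical
  have h1 : ((S.sort (· ≤ ·)).filter (fun x => decide (P x))).toFinset = S.filter P := by
    rw [List.toFinset_filter, Finset.sort_toFinset]
    apply Finset.filter_congr
    intro x _
    simp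
  rw [← h1, List.toFinset_card_of_nodup ((Finset.sort_nodup S _).filter _)]

lemma length_filter_le_of_drop_false (l : List α) (q : α → Bool) (j : ℕ)
    (hq : ∀ x ∈ l.drop j, q x = false) : (l.filter q).length ≤ j := by
  have h0 : List.filter q (List.drop j l) = [] :=
    List.filter_eq_nil_iff.mpr (fun x hx => by simp [hq x hx])
  conv_lhs => rw [← List.take_append_drop j l]
  rw [List.filter_append, h0, List.append_nil]
  exact le_trans (List.length_filter_le _ _) (by simp)

lemma le_length_filter_of_take_true (l : List α) (q : α → Bool) (j : ℕ)
    (hq : ∀ x ∈ l.take j, q x = true) : (l.take j).length ≤ (l.filter q).length := by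
  conv_rhs => rw [← List.take_append_drop j l]
  rw [List.filter_append, List.filter_eq_self.mpr hq, List.length_append]
  exact Nat.le_add_right _ _

lemma le_length_filter_of_drop_true (l : List α) (q : α → Bool) (j : ℕ)
    (hq : ∀ x ∈ l.drop j, q x = true) : l.length - j ≤ (l.filter q).length := by
  conv_rhs => rw [← List.take_append_drop j l]
  rw [List.filter_append, List.filter_eq_self.mpr hq, List.length_append, List.length_drop]
  exact Nat.le_add_left _ _

lemma length_filter_le_of_take_false (l : List α) (q : α → Bool) (j : ℕ)
    (hq : ∀ x ∈ l.take j, q x = false) : (l.filter q).length ≤ l.length - j := by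
  conv_lhs => rw [← List.take_append_drop j l]
  rw [List.filter_append, List.filter_eq_nil_iff.mpr (fun x hx => by simp [hq x hx]),
    List.nil_append]
  exact le_trans (List.length_filter_le _ _) (by simp)

lemma mem_take_le (l : List α) (hs : l.Pairwise (· ≤ ·)) (j : ℕ) (hj : j < l.length)
    (x : α) (hx : x ∈ l.take (j + 1)) : x ≤ l[j] := by
  obtain ⟨i, hi, rfl⟩ := List.getElem_of_mem hx
  rw [List.length_take] at hi
  have hij : i ≤ j := Nat.lt_succ_iff.mp (lt_of_lt_of_le hi (min_le_left _ _))
  rw [List.getElem_take]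
  exact hs.rel_get_of_le (a := ⟨i, by omega⟩) (b := ⟨j, hj⟩) hij

lemma mem_drop_ge (l : List α) (hs : l.Pairwise (· ≤ ·)) (j : ℕ) (hj : j < l.length)
    (x : α) (hx : x ∈ l.drop j) : l[j] ≤ x := by
  obtain ⟨i, hi, rfl⟩ := List.getElem_of_mem hx
  rw [List.length_drop] at hi
  rw [List.getElem_drop]
  exact hs.rel_get_of_le (a := ⟨j, hj⟩) (b := ⟨j + i, by omega⟩) (Nat.le_add_right _ _)

/-- Lower bound: at least `l.length - j` elements of `S` are `≥ l[j]`. -/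
lemma R1 (S : Finset α) (j : ℕ) (hj : j < (S.sort (· ≤ ·)).length) :
    (S.sort (· ≤ ·)).length - j ≤ (S.filter fun x => (S.sort (· ≤ ·))[j] ≤ x).card := by
  classical
  rw [card_filter_eq_length_filter]
  apply le_length_filter_of_drop_true
  intro x hx
  simp [mem_drop_ge _ (Finset.pairwise_sort S _) j hj x hx]

/-- Upper bound: at most `l.length - (j+1)` elements of `S` are `> l[j]`. -/
lemma R2 (S : Finset α) (j : ℕ) (hj : j < (S.sort (· ≤ ·)).length) :
    (S.filter fun x => (S.sort (· ≤ ·))[j] < x).card ≤ (S.sort (· ≤ ·)).length - (j + 1) := by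
  classical
  rw [card_filter_eq_length_filter]
  apply length_filter_le_of_take_false
  intro x hx
  simp [not_lt.mpr (mem_take_le _ (Finset.pairwise_sort S _) j hj x hx)]

/-- Lower bound: at least `j + 1` elements of `S` are `≤ l[j]`. -/
lemma L1 (S : Finset α) (j : ℕ) (hj : j < (S.sort (· ≤ ·)).length) :
    j + 1 ≤ (S.filter fun x => x ≤ (S.sort (· ≤ ·))[j]).card := by
  classical
  rw [card_filter_eq_length_filter]
  have := le_length_filter_of_take_true (S.sort (· ≤ ·))
    (fun x => decide (x ≤ (S.sort (· ≤ ·))[j])) (j + 1)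
    (fun x hx => by simp [mem_take_le _ (Finset.pairwise_sort S _) j hj x hx])
  rwa [List.length_take, Nat.min_eq_left hj] at this

/-- Upper bound: at most `j` elements of `S` are `< l[j]`. -/
lemma L2 (S : Finset α) (j : ℕ) (hj : j < (S.sort (· ≤ ·)).length) :
    (S.filter fun x => x < (S.sort (· ≤ ·))[j]).card ≤ j := by
  classical
  rw [card_filter_eq_length_filter]
  apply length_filter_le_of_drop_false
  intro x hx
  simp [not_lt.mpr (mem_drop_ge _ (Finset.pairwise_sort S _) j hj x hx)]

end ListCount

/-! ### Dominance lemmas -/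

lemma dom_right_getElem {n : ℕ} (V Vs : Finset (Fin n)) (hcard : Vs.card ≤ V.card)
    (hdom : ∀ h ∈ Finset.Icc 1 n,
      (Vs.filter fun i : Fin n => n - h ≤ (i : ℕ)).card ≤
        (V.filter fun i : Fin n => n - h ≤ (i : ℕ)).card)
    (t : ℕ) (ht : t < Vs.card) :
    (Vs.sort (· ≤ ·))[t]'(by rw [Finset.length_sort]; exact ht) ≤
      (V.sort (· ≤ ·))[V.card - Vs.card + t]'(by rw [Finset.length_sort]; omega) := by
  classical
  by_contra hcon
  push_neg at hcon
  set m := Vs.card with hm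
  set k := V.card with hk
  have htA : t < (Vs.sort (· ≤ ·)).length := by rw [Finset.length_sort]; exact ht
  have hj0 : k - m + t < (V.sort (· ≤ ·)).length := by rw [Finset.length_sort]; omega
  set v : Fin n := (Vs.sort (· ≤ ·))[t] with hv
  have hvn : (v : ℕ) < n := v.isLt
  have hmem : n - (v : ℕ) ∈ Finset.Icc 1 n := by
    simp only [Finset.mem_Icc]; omega
  have hd := hdom (n - (v : ℕ)) hmem
  have hconv : ∀ S : Finset (Fin n),
      (S.filter fun i : Fin n => n - (n - (v : ℕ)) ≤ (i : ℕ)) = S.filter fun i => v ≤ i := by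
    intro S
    apply Finset.filter_congr
    intro i _
    rw [Nat.sub_sub_self (le_of_lt hvn)]
    exact Fin.le_def.symm
  rw [hconv Vs, hconv V] at hd
  have h1 : (Vs.sort (· ≤ ·)).length - t ≤ (Vs.filter fun x => v ≤ x).card := R1 Vs t htA
  rw [Finset.length_sort] at h1
  have h2 : (V.filter fun x => v ≤ x).card ≤
      (V.filter fun x => (V.sort (· ≤ ·))[k - m + t] < x).card := by
    apply Finset.card_le_card
    apply Finset.monotone_filter_right
    intro x _ hx
    exact lt_of_lt_of_le hcon hx
  have h3 := R2 V (k - m + t) hj0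
  rw [Finset.length_sort] at h3
  omega

lemma dom_left_getElem {n : ℕ} (V Vs : Finset (Fin n)) (hcard : Vs.card ≤ V.card)
    (hdom : ∀ h ∈ Finset.Icc 1 n,
      (Vs.filter fun i : Fin n => (i : ℕ) < h).card ≤
        (V.filter fun i : Fin n => (i : ℕ) < h).card)
    (t : ℕ) (ht : t < Vs.card) :
    (V.sort (· ≤ ·))[t]'(by rw [Finset.length_sort]; omega) ≤
      (Vs.sort (· ≤ ·))[t]'(by rw [Finset.length_sort]; exact ht) := by
  classical
  by_contra hcon
  push_neg at hcon
  have htA : t < (Vs.sort (· ≤ ·)).length := by rw [Finset.length_sort]; exact ht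
  have htB : t < (V.sort (· ≤ ·)).length := by rw [Finset.length_sort]; omega
  set v : Fin n := (Vs.sort (· ≤ ·))[t] with hv
  have hvn : (v : ℕ) < n := v.isLt
  have hmem : (v : ℕ) + 1 ∈ Finset.Icc 1 n := by
    simp only [Finset.mem_Icc]; omega
  have hd := hdom ((v : ℕ) + 1) hmem
  have hconv : ∀ S : Finset (Fin n),
      (S.filter fun i : Fin n => (i : ℕ) < (v : ℕ) + 1) = S.filter fun i => i ≤ v := by
    intro S
    apply Finset.filter_congr
    intro i _
    rw [Nat.lt_succ_iff]
    exact Fin.le_def.symm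
  rw [hconv Vs, hconv V] at hd
  have h1 : t + 1 ≤ (Vs.filter fun x => x ≤ v).card := L1 Vs t htA
  have h2 : (V.filter fun x => x ≤ v).card ≤
      (V.filter fun x => x < (V.sort (· ≤ ·))[t]).card := by
    apply Finset.card_le_card
    apply Finset.monotone_filter_right
    intro x _ hx
    exact lt_of_le_of_lt hx hcon
  have h3 := L2 V t htB
  omega

/-! ### The main theorem -/

theorem stmt_8 (n : ℕ) (p : Fin n → ℝ) (hp : ∀ i, 0 < p i ∧ p i < 1)
    (hmono : ∀ i j : Fin n, i ≤ j → p i ≤ p j)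
    (V Vs : Finset (Fin n)) (hcard : Vs.card ≤ V.card)
    (hdom : ∀ h ∈ Finset.Icc 1 n,
      (Vs.filter fun i : Fin n => (i : ℕ) < h).card ≤
        (V.filter fun i : Fin n => (i : ℕ) < h).card ∧
      (Vs.filter fun i : Fin n => n - h ≤ (i : ℕ)).card ≤
        (V.filter fun i : Fin n => n - h ≤ (i : ℕ)).card) :
    ∀ ℓ ∈ Finset.Icc 1 Vs.card,
      (pr p (fun x => ℓ ≤ (Vs.filter fun i => x i = true).card) ≤
        pr p (fun x => ℓ ≤ (V.filter fun i => x i = true).card)) ∧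
      (pr p (fun x => ℓ ≤ (Vs.filter fun i => x i = false).card) ≤
        pr p (fun x => ℓ ≤ (V.filter fun i => x i = false).card)) := by
  classical
  intro ℓ _
  -- `pr` in terms of `T` of the sorted lists
  have key : ∀ (b : Bool) (S : Finset (Fin n)) (ℓ : ℕ),
      pr p (fun x => ℓ ≤ (S.filter fun i => x i = b).card) =
        T ((S.sort (· ≤ ·)).map fun i => if b then p i else 1 - p i) ℓ := by
    intro b S ℓ
    rw [pr_eq_T p b S ℓ]
    exact (T_perm ((Finset.sort_perm_toList S (· ≤ ·)).map _) ℓ).symm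
  have okmap : ∀ (b : Bool) (L : List (Fin n)),
      Ok (L.map fun i => if b then p i else 1 - p i) := by
    intro b L x hx
    rcases List.mem_map.mp hx with ⟨i, _, rfl⟩
    have h1 := (hp i).1
    have h2 := (hp i).2
    cases b <;> simp <;> constructor <;> linarith
  set A := Vs.sort (· ≤ ·) with hA
  set B := V.sort (· ≤ ·) with hB
  have hAl : A.length = Vs.card := Finset.length_sort _
  have hBl : B.length = V.card := Finset.length_sort _
  constructor
  · -- true case (use right dominance)
    rw [key true Vs ℓ, key true V ℓ]
    have hF : List.Forall₂ (· ≤ ·) (A.map fun i => if true then p i else 1 - p i)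
        ((B.drop (V.card - Vs.card)).map fun i => if true then p i else 1 - p i) := by
      rw [List.forall₂_iff_get]
      constructor
      · simp only [List.length_map, List.length_drop, hAl, hBl]
        omega
      · intro i h1 h2
        simp only [List.length_map, hAl] at h1
        simp only [List.get_eq_getElem, List.getElem_map, List.getElem_drop, if_true]
        apply hmono
        exact dom_right_getElem V Vs hcard (fun h hh => (hdom h hh).2) i h1
    calc T (A.map fun i => if true then p i else 1 - p i) ℓ
        ≤ T ((B.drop (V.card - Vs.card)).map fun i => if true then p i else 1 - p i) ℓ :=
          T_mono hF (okmap true A) (okmap true _) ℓ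
      _ ≤ T ((B.take (V.card - Vs.card)).map (fun i => if true then p i else 1 - p i) ++
            (B.drop (V.card - Vs.card)).map fun i => if true then p i else 1 - p i) ℓ :=
          T_append_left (okmap true _) (okmap true _) ℓ
      _ = T (B.map fun i => if true then p i else 1 - p i) ℓ := by
          rw [← List.map_append, List.take_append_drop]
  · -- false case (use left dominance)
    rw [key false Vs ℓ, key false V ℓ]
    have hF : List.Forall₂ (· ≤ ·) (A.map fun i => if false then p i else 1 - p i)
        ((B.take Vs.card).map fun i => if false then p i else 1 - p i) := by
      rw [List.forall₂_iff_get]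
      constructor
      · simp only [List.length_map, List.length_take, hAl, hBl]
        omega
      · intro i h1 h2
        simp only [List.length_map, hAl] at h1
        simp only [List.get_eq_getElem, List.getElem_map, List.getElem_take, Bool.false_eq_true,
          if_false]
        exact sub_le_sub_left
          (hmono _ _ (dom_left_getElem V Vs hcard (fun h hh => (hdom h hh).1) i h1)) 1
    calc T (A.map fun i => if false then p i else 1 - p i) ℓ
        ≤ T ((B.take Vs.card).map fun i => if false then p i else 1 - p i) ℓ :=
          T_mono hF (okmap false A) (okmap false _) ℓ
      _ ≤ T ((B.take Vs.card).map (fun i => if false then p i else 1 - p i) ++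
            (B.drop Vs.card).map fun i => if false then p i else 1 - p i) ℓ :=
          T_append_right (okmap false _) (okmap false _) ℓ
      _ = T (B.map fun i => if false then p i else 1 - p i) ℓ := by
          rw [← List.map_append, List.take_append_drop]
end

section
/- Let ε > 0 with 1/ε ∈ ℕ and let n, b be positive integers. Then there exists a function A mapping each tuple of sizes (s_1,…,s_b) with s_i ≥ 1/ε and each tuple of milestone values (μ_{i,j})_{i∈[b], j∈[1/ε−1]} with μ_{i,j} ∈ [n] to a b-tuple (V_1,…,V_b) of pairwise disjoint subsets of [n] with |V_i| ≤ (1+2ε)·s_i for all i ∈ [b], such that: for every b-tuple (V*_1,…,V*_b) of pairwise disjoint subsets of [n] with |V*_i| = s_i and m(V*_i, j) = μ_{i,j} for all i ∈ [b] and j ∈ [1/ε−1], the output (V_1,…,V_b) = A((s_i), (μ_{i,j})) satisfies ∪_{i'=1}^{i} V_{i'} ⪰ ∪_{i'=1}^{i} V*_{i'} for all i ∈ [b]. -/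
open Finset

/-- `V ⪰ V*`: `|V| ≥ |V*|` and for every `h ∈ [n]`, `|V ∩ [h]| ≥ |V* ∩ [h]|` and
`|V ∩ [−h]| ≥ |V* ∩ [−h]|` (elements of `[n]` represented by `Fin n`, `[h]` by
`{i : (i:ℕ) < h}`, `[−h]` by `{i : n − h ≤ (i:ℕ)}`). -/
def Dominates {n : ℕ} (V Vs : Finset (Fin n)) : Prop :=
  Vs.card ≤ V.card ∧
  ∀ h ∈ Finset.Icc 1 n,
    (Vs.filter fun i : Fin n => (i : ℕ) < h).card ≤
      (V.filter fun i : Fin n => (i : ℕ) < h).card ∧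
    (Vs.filter fun i : Fin n => n - h ≤ (i : ℕ)).card ≤
      (V.filter fun i : Fin n => n - h ≤ (i : ℕ)).card


namespace St12

variable {n : ℕ}

/-- counting function relative to a permutation of positions -/
def scnt (σ : Equiv.Perm (Fin n)) (S : Finset (Fin n)) (t : ℕ) : ℕ :=
  (S.filter fun v => ((σ v : Fin n) : ℕ) < t).card

lemma scnt_zero (σ : Equiv.Perm (Fin n)) (S : Finset (Fin n)) : scnt σ S 0 = 0 := by
  simp [scnt]

lemma scnt_mono (σ : Equiv.Perm (Fin n)) (S : Finset (Fin n)) {t t' : ℕ} (h : t ≤ t') :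
    scnt σ S t ≤ scnt σ S t' := by
  apply card_le_card
  intro v hv
  simp only [mem_filter] at *
  exact ⟨hv.1, lt_of_lt_of_le hv.2 h⟩

lemma scnt_subset (σ : Equiv.Perm (Fin n)) {S T : Finset (Fin n)} (h : S ⊆ T) (t : ℕ) :
    scnt σ S t ≤ scnt σ T t :=
  card_le_card (filter_subset_filter _ h)

lemma scnt_le_card (σ : Equiv.Perm (Fin n)) (S : Finset (Fin n)) (t : ℕ) :
    scnt σ S t ≤ S.card :=
  card_filter_le _ _

lemma scnt_top (σ : Equiv.Perm (Fin n)) (S : Finset (Fin n)) {t : ℕ} (h : n ≤ t) :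
    scnt σ S t = S.card := by
  unfold scnt
  rw [filter_true_of_mem]
  intro v _
  exact lt_of_lt_of_le (σ v).isLt h

lemma scnt_union_of_disjoint (σ : Equiv.Perm (Fin n)) {S T : Finset (Fin n)}
    (h : Disjoint S T) (t : ℕ) : scnt σ (S ∪ T) t = scnt σ S t + scnt σ T t := by
  unfold scnt
  rw [filter_union, card_union_of_disjoint (disjoint_filter_filter h)]

lemma scnt_succ (σ : Equiv.Perm (Fin n)) (S : Finset (Fin n)) (t : ℕ) :
    scnt σ S (t + 1) = scnt σ S t + (if ∃ v ∈ S, ((σ v : Fin n) : ℕ) = t then 1 else 0) := by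
  classical
  have hsplit : S.filter (fun v => ((σ v : Fin n) : ℕ) < t + 1)
      = S.filter (fun v => ((σ v : Fin n) : ℕ) < t) ∪ S.filter (fun v => ((σ v : Fin n) : ℕ) = t) := by
    ext v
    simp only [mem_filter, mem_union]
    constructor
    · rintro ⟨hv, hlt⟩
      rcases Nat.lt_succ_iff_lt_or_eq.1 hlt with h | h
      · exact Or.inl ⟨hv, h⟩
      · exact Or.inr ⟨hv, h⟩
    · rintro (⟨hv, h⟩ | ⟨hv, h⟩)
      · exact ⟨hv, Nat.lt_succ_of_lt h⟩
      · exact ⟨hv, by omega⟩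
  have hdisj : Disjoint (S.filter (fun v => ((σ v : Fin n) : ℕ) < t))
      (S.filter (fun v => ((σ v : Fin n) : ℕ) = t)) := by
    rw [disjoint_left]
    intro v h1 h2
    simp only [mem_filter] at h1 h2
    omega
  have hcard : (S.filter (fun v => ((σ v : Fin n) : ℕ) = t)).card
      = if ∃ v ∈ S, ((σ v : Fin n) : ℕ) = t then 1 else 0 := by
    split_ifs with h
    · obtain ⟨v0, hv0S, hv0⟩ := h
      have : S.filter (fun v => ((σ v : Fin n) : ℕ) = t) = {v0} := by
        ext v
        simp only [mem_filter, mem_singleton]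
        constructor
        · rintro ⟨hvS, hvt⟩
          apply σ.injective
          exact Fin.ext (hvt.trans hv0.symm)
        · rintro rfl; exact ⟨hv0S, hv0⟩
      rw [this, card_singleton]
    · rw [filter_eq_empty_iff.2, card_empty]
      intro v hv hvt
      exact h ⟨v, hv, hvt⟩
  unfold scnt
  rw [hsplit, card_union_of_disjoint hdisj, hcard]

/-- Greedy fill: extend `X` by a set `P` so that the `σ`-counting function of `X ∪ P`
dominates the target `f`, while `P`'s counting function is bounded by running deficits. -/
lemma fill_exists (σ : Equiv.Perm (Fin n)) (X : Finset (Fin n)) (f : ℕ → ℕ)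
    (hf0 : f 0 = 0) (hlip : ∀ t, f (t + 1) ≤ f t + 1) :
    ∃ P : Finset (Fin n), Disjoint P X ∧
      (∀ t, t ≤ n → f t ≤ scnt σ (X ∪ P) t) ∧
      (∀ t, scnt σ P t ≤ (Finset.range (t + 1)).sup fun t' => f t' - scnt σ X t') := by
  classical
  let cnd : ℕ → ℕ → Prop := fun t m => (∃ v ∈ X, ((σ v : Fin n) : ℕ) = t) ∨ (m < f (t + 1) ∧ t < n)
  let c : ℕ → ℕ := fun t => Nat.rec (motive := fun _ => ℕ) 0
    (fun t ih => ih + @ite _ (cnd t ih) (Classical.propDecidable _) 1 0) t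
  have hcs : ∀ t, c (t + 1) = c t + @ite _ (cnd t (c t)) (Classical.propDecidable _) 1 0 :=
    fun t => rfl
  have hcnd : ∀ t m, cnd t m ↔ ((∃ v ∈ X, ((σ v : Fin n) : ℕ) = t) ∨ (m < f (t + 1) ∧ t < n)) :=
    fun t m => Iff.rfl
  set P : Finset (Fin n) :=
    @Finset.filter _ (fun v => v ∉ X ∧ c ((σ v : Fin n) : ℕ) < f (((σ v : Fin n) : ℕ) + 1))
      (fun v => Classical.propDecidable _) univ with hPdef
  have hmemP : ∀ v, v ∈ P ↔ v ∉ X ∧ c ((σ v : Fin n) : ℕ) < f (((σ v : Fin n) : ℕ) + 1) := by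
    intro v
    simp only [hPdef, Finset.mem_filter, Finset.mem_univ, true_and]
  have hdisj : Disjoint P X := by
    rw [disjoint_left]
    intro v hvP hvX
    exact ((hmemP v).1 hvP).1 hvX
  have hXP : ∀ t, scnt σ (X ∪ P) t = c t := by
    intro t
    induction t with
    | zero => rw [scnt_zero]; exact rfl
    | succ t ih =>
      rw [scnt_succ, ih, hcs]
      congr 1
      have : (∃ v ∈ X ∪ P, ((σ v : Fin n) : ℕ) = t) ↔
          ((∃ v ∈ X, ((σ v : Fin n) : ℕ) = t) ∨ (c t < f (t + 1) ∧ t < n)) := by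
        constructor
        · rintro ⟨v, hv, hvt⟩
          rcases mem_union.1 hv with h | h
          · exact Or.inl ⟨v, h, hvt⟩
          · obtain ⟨-, hlt⟩ := (hmemP v).1 h
            right
            refine ⟨by rwa [hvt] at hlt, hvt ▸ (σ v).isLt⟩
        · rintro (⟨v, hv, hvt⟩ | ⟨hlt, htn⟩)
          · exact ⟨v, mem_union_left _ hv, hvt⟩
          · set v0 := σ.symm ⟨t, htn⟩ with hv0
            have hσv0 : ((σ v0 : Fin n) : ℕ) = t := by
              rw [hv0, Equiv.apply_symm_apply]
            by_cases hX : v0 ∈ X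
            · exact ⟨v0, mem_union_left _ hX, hσv0⟩
            · refine ⟨v0, mem_union_right _ ((hmemP v0).2 ⟨hX, ?_⟩), hσv0⟩
              rwa [hσv0]
      rcases Classical.em (cnd t (c t)) with h | h
      · rw [if_pos (this.mpr h), if_pos h]
      · rw [if_neg (fun hh => h (this.mp hh)), if_neg h]
  have hfc : ∀ t, t ≤ n → f t ≤ c t := by
    intro t
    induction t with
    | zero => intro _; exact hf0.le
    | succ t ih =>
      intro htn
      have ht : t < n := htn
      have ihc := ih (le_of_lt ht)
      rw [hcs]
      rcases Classical.em (cnd t (c t)) with hcond | hcond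
      · rw [if_pos hcond]
        have := hlip t
        omega
      · rw [if_neg hcond]
        have h2 : ¬ (c t < f (t + 1)) := fun hlt => hcond (Or.inr ⟨hlt, ht⟩)
        omega
  have hadd : ∀ t, c t = scnt σ X t + scnt σ P t := by
    intro t
    rw [← hXP t, scnt_union_of_disjoint σ (disjoint_comm.1 hdisj)]
  have hPb : ∀ t, scnt σ P t ≤ (Finset.range (t + 1)).sup fun t' => f t' - scnt σ X t' := by
    intro t
    induction t with
    | zero => rw [scnt_zero]; exact Nat.zero_le _
    | succ t ih =>
      have hsub : (Finset.range (t + 1)).sup (fun t' => f t' - scnt σ X t')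
          ≤ (Finset.range (t + 2)).sup (fun t' => f t' - scnt σ X t') :=
        Finset.sup_mono (by intro x hx; simp only [mem_range] at *; omega)
      rw [scnt_succ]
      by_cases hP : ∃ v ∈ P, ((σ v : Fin n) : ℕ) = t
      · rw [if_pos hP]
        obtain ⟨v, hvP, hvt⟩ := hP
        obtain ⟨hvX, hlt⟩ := (hmemP v).1 hvP
        rw [hvt] at hlt
        have hXeq : scnt σ X (t + 1) = scnt σ X t := by
          rw [scnt_succ, if_neg, add_zero]
          rintro ⟨w, hwX, hwt⟩
          have : w = v := σ.injective (Fin.ext (hwt.trans hvt.symm))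
          exact hvX (this ▸ hwX)
        have h1 : scnt σ P t = c t - scnt σ X t := by
          have := hadd t; omega
        have h2 : scnt σ X t ≤ c t := by have := hadd t; omega
        have : scnt σ P t + 1 ≤ f (t + 1) - scnt σ X (t + 1) := by
          rw [hXeq, h1]; omega
        calc scnt σ P t + 1 ≤ f (t + 1) - scnt σ X (t + 1) := this
          _ ≤ _ := Finset.le_sup (f := fun t' => f t' - scnt σ X t') (Finset.self_mem_range_succ (t + 1))
      · rw [if_neg hP, add_zero]
        exact le_trans ih hsub
  exact ⟨P, hdisj, fun t htn => (hXP t) ▸ hfc t htn, hPb⟩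

end St12

namespace St12

variable {n : ℕ}

lemma natSup_le {S : Set ℕ} {m : ℕ} (h : ∀ x ∈ S, x ≤ m) : sSup S ≤ m := by
  rcases Set.eq_empty_or_nonempty S with rfl | hne
  · exact le_trans (le_of_eq csSup_empty) bot_le
  · exact csSup_le hne h

lemma le_natSup {S : Set ℕ} {m x : ℕ} (hb : ∀ y ∈ S, y ≤ m) (hx : x ∈ S) : x ≤ sSup S :=
  le_csSup ⟨m, fun y hy => hb y hy⟩ hx

lemma card_le_n (S : Finset (Fin n)) : S.card ≤ n :=
  le_trans (card_le_univ S) (le_of_eq (by simp))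

section Main

variable (b e : ℕ) (ε : ℝ) (s : ℕ → ℕ) (μ : ℕ → ℕ → Fin n)

def valid (Vs : ℕ → Finset (Fin n)) : Prop :=
  (∀ i ∈ Finset.Icc 1 b, ∀ i' ∈ Finset.Icc 1 b, i ≠ i' → Disjoint (Vs i) (Vs i')) ∧
  (∀ i ∈ Finset.Icc 1 b, (Vs i).card = s i) ∧
  (∀ i ∈ Finset.Icc 1 b, ∀ j ∈ Finset.Icc 1 (e - 1),
    μ i j ∈ Vs i ∧ ((Vs i).filter fun v => v ≤ μ i j).card = ⌊(j : ℝ) * ε * (s i : ℝ)⌋₊)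

noncomputable def UU (σ : Equiv.Perm (Fin n)) (i t : ℕ) : ℕ :=
  sSup ((fun Vs => scnt σ ((Finset.Icc 1 i).biUnion Vs) t) '' {Vs | valid b e ε s μ Vs})

noncomputable def uu (σ : Equiv.Perm (Fin n)) (i t : ℕ) : ℕ :=
  sSup ((fun Vs => scnt σ (Vs i) t) '' {Vs | valid b e ε s μ Vs})

noncomputable def ll (i t : ℕ) : ℕ :=
  sInf ((fun Vs => scnt (Equiv.refl (Fin n)) (Vs i) t) '' {Vs | valid b e ε s μ Vs})

lemma le_UU {Vs : ℕ → Finset (Fin n)} (hVs : valid b e ε s μ Vs) (σ : Equiv.Perm (Fin n))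
    (i t : ℕ) : scnt σ ((Finset.Icc 1 i).biUnion Vs) t ≤ UU b e ε s μ σ i t := by
  have hmem : scnt σ ((Finset.Icc 1 i).biUnion Vs) t
      ∈ (fun Vs => scnt σ ((Finset.Icc 1 i).biUnion Vs) t) '' {Vs | valid b e ε s μ Vs} :=
    ⟨Vs, hVs, rfl⟩
  refine le_natSup (m := n) ?_ hmem
  rintro y ⟨Ws, -, rfl⟩
  exact le_trans (scnt_le_card _ _ _) (card_le_n _)

lemma UU_le {σ : Equiv.Perm (Fin n)} {i t m : ℕ}
    (h : ∀ Vs, valid b e ε s μ Vs → scnt σ ((Finset.Icc 1 i).biUnion Vs) t ≤ m) :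
    UU b e ε s μ σ i t ≤ m := by
  apply natSup_le
  rintro x ⟨Vs, hVs, rfl⟩
  exact h Vs hVs

lemma le_uu {Vs : ℕ → Finset (Fin n)} (hVs : valid b e ε s μ Vs) (σ : Equiv.Perm (Fin n))
    (i t : ℕ) : scnt σ (Vs i) t ≤ uu b e ε s μ σ i t := by
  have hmem : scnt σ (Vs i) t
      ∈ (fun Vs => scnt σ (Vs i) t) '' {Vs | valid b e ε s μ Vs} := ⟨Vs, hVs, rfl⟩
  refine le_natSup (m := n) ?_ hmem
  rintro y ⟨Ws, -, rfl⟩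
  exact le_trans (scnt_le_card _ _ _) (card_le_n _)

lemma uu_le {σ : Equiv.Perm (Fin n)} {i t m : ℕ}
    (h : ∀ Vs, valid b e ε s μ Vs → scnt σ (Vs i) t ≤ m) :
    uu b e ε s μ σ i t ≤ m := by
  apply natSup_le
  rintro x ⟨Vs, hVs, rfl⟩
  exact h Vs hVs

lemma ll_le {Vs : ℕ → Finset (Fin n)} (hVs : valid b e ε s μ Vs) (i t : ℕ) :
    ll b e ε s μ i t ≤ scnt (Equiv.refl (Fin n)) (Vs i) t :=
  Nat.sInf_le ⟨Vs, hVs, rfl⟩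

lemma UU_zero (σ : Equiv.Perm (Fin n)) (i : ℕ) : UU b e ε s μ σ i 0 = 0 :=
  Nat.le_zero.1 (UU_le b e ε s μ fun Vs _ => le_of_eq (scnt_zero σ _))

lemma UU_lip (σ : Equiv.Perm (Fin n)) (i : ℕ) :
    ∀ t, UU b e ε s μ σ i (t + 1) ≤ UU b e ε s μ σ i t + 1 := by
  intro t
  apply UU_le
  intro Vs hVs
  have h1 : scnt σ ((Finset.Icc 1 i).biUnion Vs) (t + 1)
      ≤ scnt σ ((Finset.Icc 1 i).biUnion Vs) t + 1 := by
    rw [scnt_succ]; split_ifs <;> omega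
  exact le_trans h1 (Nat.add_le_add_right (le_UU b e ε s μ hVs σ i t) 1)

lemma UU_mono (σ : Equiv.Perm (Fin n)) (i : ℕ) {t t' : ℕ} (h : t ≤ t') :
    UU b e ε s μ σ i t ≤ UU b e ε s μ σ i t' :=
  UU_le b e ε s μ fun Vs hVs => le_trans (scnt_mono σ _ h) (le_UU b e ε s μ hVs σ i t')

lemma uu_mono (σ : Equiv.Perm (Fin n)) (i : ℕ) {t t' : ℕ} (h : t ≤ t') :
    uu b e ε s μ σ i t ≤ uu b e ε s μ σ i t' :=
  uu_le b e ε s μ fun Vs hVs => le_trans (scnt_mono σ _ h) (le_uu b e ε s μ hVs σ i t')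

lemma UU_bot (σ : Equiv.Perm (Fin n)) (t : ℕ) : UU b e ε s μ σ 0 t = 0 := by
  apply Nat.le_zero.1
  apply UU_le
  intro Vs hVs
  simp [scnt]

lemma UU_decomp (σ : Equiv.Perm (Fin n)) (i t : ℕ) :
    UU b e ε s μ σ (i + 1) t ≤ UU b e ε s μ σ i t + uu b e ε s μ σ (i + 1) t := by
  apply UU_le
  intro Vs hVs
  have hsplit : (Finset.Icc 1 (i + 1)).biUnion Vs
      ⊆ (Finset.Icc 1 i).biUnion Vs ∪ Vs (i + 1) := by
    intro v hv
    rw [Finset.mem_biUnion] at hv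
    obtain ⟨j, hj, hvj⟩ := hv
    rw [Finset.mem_Icc] at hj
    rcases Nat.lt_or_ge j (i + 1) with h | h
    · exact Finset.mem_union_left _ (Finset.mem_biUnion.2 ⟨j, Finset.mem_Icc.2 ⟨hj.1, by omega⟩, hvj⟩)
    · have : j = i + 1 := by omega
      exact Finset.mem_union_right _ (this ▸ hvj)
  have h1 : scnt σ ((Finset.Icc 1 (i + 1)).biUnion Vs) t
      ≤ scnt σ ((Finset.Icc 1 i).biUnion Vs) t + scnt σ (Vs (i + 1)) t := by
    refine le_trans (scnt_subset σ hsplit t) ?_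
    unfold scnt
    rw [filter_union]
    exact card_union_le _ _
  exact le_trans h1 (add_le_add (le_UU b e ε s μ hVs σ i t) (le_uu b e ε s μ hVs σ (i + 1) t))

noncomputable def Pset (Y : Finset (Fin n)) (i : ℕ) : Finset (Fin n) :=
  (fill_exists (Equiv.refl (Fin n)) Y (UU b e ε s μ (Equiv.refl (Fin n)) i)
    (UU_zero b e ε s μ _ i) (UU_lip b e ε s μ _ i)).choose

lemma Pset_spec (Y : Finset (Fin n)) (i : ℕ) :
    Disjoint (Pset b e ε s μ Y i) Y ∧
    (∀ t, t ≤ n → UU b e ε s μ (Equiv.refl (Fin n)) i t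
        ≤ scnt (Equiv.refl (Fin n)) (Y ∪ Pset b e ε s μ Y i) t) ∧
    (∀ t, scnt (Equiv.refl (Fin n)) (Pset b e ε s μ Y i) t ≤
      (Finset.range (t + 1)).sup fun t' =>
        UU b e ε s μ (Equiv.refl (Fin n)) i t' - scnt (Equiv.refl (Fin n)) Y t') :=
  (fill_exists (Equiv.refl (Fin n)) Y (UU b e ε s μ (Equiv.refl (Fin n)) i)
    (UU_zero b e ε s μ _ i) (UU_lip b e ε s μ _ i)).choose_spec

noncomputable def Qset (Y : Finset (Fin n)) (i : ℕ) : Finset (Fin n) :=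
  (fill_exists Fin.revPerm (Y ∪ Pset b e ε s μ Y i) (UU b e ε s μ Fin.revPerm i)
    (UU_zero b e ε s μ _ i) (UU_lip b e ε s μ _ i)).choose

lemma Qset_spec (Y : Finset (Fin n)) (i : ℕ) :
    Disjoint (Qset b e ε s μ Y i) (Y ∪ Pset b e ε s μ Y i) ∧
    (∀ t, t ≤ n → UU b e ε s μ Fin.revPerm i t
        ≤ scnt Fin.revPerm (Y ∪ Pset b e ε s μ Y i ∪ Qset b e ε s μ Y i) t) ∧
    (∀ t, scnt Fin.revPerm (Qset b e ε s μ Y i) t ≤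
      (Finset.range (t + 1)).sup fun t' =>
        UU b e ε s μ Fin.revPerm i t' - scnt Fin.revPerm (Y ∪ Pset b e ε s μ Y i) t') :=
  (fill_exists Fin.revPerm (Y ∪ Pset b e ε s μ Y i) (UU b e ε s μ Fin.revPerm i)
    (UU_zero b e ε s μ _ i) (UU_lip b e ε s μ _ i)).choose_spec

noncomputable def Xstep (Y : Finset (Fin n)) (i : ℕ) : Finset (Fin n) :=
  Y ∪ Pset b e ε s μ Y i ∪ Qset b e ε s μ Y i

noncomputable def XX : ℕ → Finset (Fin n) := fun i =>
  Nat.rec (motive := fun _ => Finset (Fin n)) ∅ (fun i ih => Xstep b e ε s μ ih (i + 1)) i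

lemma XX_zero : XX b e ε s μ 0 = (∅ : Finset (Fin n)) := rfl

lemma XX_succ (i : ℕ) : XX b e ε s μ (i + 1) = Xstep b e ε s μ (XX b e ε s μ i) (i + 1) := rfl

lemma XX_sub_succ (i : ℕ) : XX b e ε s μ i ⊆ XX b e ε s μ (i + 1) := by
  rw [XX_succ]
  unfold Xstep
  exact subset_union_left.trans subset_union_left

lemma XX_mono : ∀ {i j : ℕ}, i ≤ j → XX b e ε s μ i ⊆ XX b e ε s μ j := by
  intro i j h
  induction j with
  | zero => rw [Nat.le_zero.1 h]
  | succ j ih =>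
    rcases Nat.lt_or_ge i (j + 1) with h' | h'
    · exact (ih (by omega)).trans (XX_sub_succ b e ε s μ j)
    · have : i = j + 1 := by omega
      rw [this]

lemma XX_biUnion (i : ℕ) :
    (Finset.Icc 1 i).biUnion (fun i' => XX b e ε s μ i' \ XX b e ε s μ (i' - 1))
      = XX b e ε s μ i := by
  induction i with
  | zero => simp [XX_zero]
  | succ i ih =>
    have hIcc : Finset.Icc 1 (i + 1) = insert (i + 1) (Finset.Icc 1 i) := by
      ext x; simp only [Finset.mem_Icc, Finset.mem_insert]; omega
    rw [hIcc, Finset.biUnion_insert, ih]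
    simp only [Nat.add_sub_cancel]
    exact Finset.sdiff_union_of_subset (XX_sub_succ b e ε s μ i)

end Main

/-- The core arithmetic gap lemma: two sets with the same size and the same milestones
have prefix counts within `2 * s / e` of each other. -/
lemma gap_core {e sI : ℕ} (he1 : 1 ≤ e) (hse : e ≤ sI) (μ' : ℕ → Fin n)
    (V V' : Finset (Fin n)) (hV : V.card = sI)
    (hm : ∀ j ∈ Finset.Icc 1 (e - 1), μ' j ∈ V ∧
      (V.filter fun v : Fin n => v ≤ μ' j).card = j * sI / e)
    (hm' : ∀ j ∈ Finset.Icc 1 (e - 1), μ' j ∈ V' ∧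
      (V'.filter fun v : Fin n => v ≤ μ' j).card = j * sI / e)
    (g : ℕ) :
    e * (V.filter fun v : Fin n => (v : ℕ) < g).card
      ≤ e * (V'.filter fun v : Fin n => (v : ℕ) < g).card + 2 * sI := by
  classical
  have hVle : (V.filter fun v : Fin n => (v : ℕ) < g).card ≤ sI := hV ▸ card_filter_le _ _
  rcases eq_or_lt_of_le he1 with he1' | he2
  · -- e = 1
    rw [← he1']
    omega
  -- e ≥ 2
  set T := (Finset.Icc 1 (e - 1)).filter (fun j => ¬ ((μ' j : ℕ) < g)) with hT
  by_cases hTne : T.Nonempty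
  · set j1 := T.min' hTne with hj1
    have hj1T : j1 ∈ T := T.min'_mem hTne
    have hj1I : j1 ∈ Finset.Icc 1 (e - 1) := (Finset.mem_filter.1 hj1T).1
    have hj1g : g ≤ (μ' j1 : ℕ) := by
      have := (Finset.mem_filter.1 hj1T).2; omega
    obtain ⟨hμV, hkV⟩ := hm j1 hj1I
    -- upper bound on V's prefix count
    have hsub : V.filter (fun v : Fin n => (v : ℕ) < g)
        ⊆ (V.filter fun v : Fin n => v ≤ μ' j1).erase (μ' j1) := by
      intro v hv
      rw [Finset.mem_filter] at hv
      rw [Finset.mem_erase, Finset.mem_filter]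
      have hlt : (v : ℕ) < (μ' j1 : ℕ) := lt_of_lt_of_le hv.2 hj1g
      exact ⟨fun h => by rw [h] at hlt; omega, hv.1, Fin.le_def.2 (le_of_lt hlt)⟩
    have hupper : (V.filter fun v : Fin n => (v : ℕ) < g).card ≤ j1 * sI / e - 1 := by
      refine le_trans (card_le_card hsub) ?_
      have hmemf : μ' j1 ∈ V.filter fun v : Fin n => v ≤ μ' j1 :=
        Finset.mem_filter.2 ⟨hμV, le_refl _⟩
      rw [Finset.card_erase_of_mem hmemf, hkV]
    have hj1b : 1 ≤ j1 ∧ j1 ≤ e - 1 := Finset.mem_Icc.1 hj1I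
    have hk1pos : 1 ≤ j1 * sI / e := by
      rw [Nat.one_le_div_iff (by omega : 0 < e)]
      calc e ≤ sI := hse
        _ = 1 * sI := (one_mul sI).symm
        _ ≤ j1 * sI := Nat.mul_le_mul_right sI hj1b.1
    rcases eq_or_lt_of_le hj1b.1 with hj11 | hj12
    · -- j1 = 1 : prefix count of V is at most sI/e - 1
      have hj1sI : j1 * sI = sI := by rw [← hj11, one_mul]
      have h1 : e * (V.filter fun v : Fin n => (v : ℕ) < g).card
          ≤ e * (j1 * sI / e - 1) := Nat.mul_le_mul_left e hupper
      have h2 : e * (j1 * sI / e - 1) ≤ e * (j1 * sI / e) :=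
        Nat.mul_le_mul_left e (Nat.sub_le _ _)
      have h3 : e * (j1 * sI / e) ≤ j1 * sI := Nat.mul_div_le _ _
      calc e * (V.filter fun v : Fin n => (v : ℕ) < g).card
          ≤ j1 * sI := le_trans h1 (le_trans h2 h3)
        _ = sI := hj1sI
        _ ≤ e * (V'.filter fun v : Fin n => (v : ℕ) < g).card + 2 * sI := by omega
    · -- j1 ≥ 2
      have hj0I : j1 - 1 ∈ Finset.Icc 1 (e - 1) := by
        rw [Finset.mem_Icc]; omega
      have hj0T : j1 - 1 ∉ T := fun h => by
        have := T.min'_le _ h; omega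
      have hj0g : (μ' (j1 - 1) : ℕ) < g := by
        by_contra h
        exact hj0T (Finset.mem_filter.2 ⟨hj0I, h⟩)
      obtain ⟨hμV', hkV'⟩ := hm' (j1 - 1) hj0I
      have hlower : (j1 - 1) * sI / e ≤ (V'.filter fun v : Fin n => (v : ℕ) < g).card := by
        rw [← hkV']
        apply card_le_card
        intro v hv
        rw [Finset.mem_filter] at hv ⊢
        refine ⟨hv.1, ?_⟩
        have := Fin.le_def.1 hv.2
        omega
      -- abbreviations
      have hA1 : e * (V.filter fun v : Fin n => (v : ℕ) < g).card
          ≤ e * (j1 * sI / e - 1) := Nat.mul_le_mul_left e hupper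
      have hA2 : e * ((j1 - 1) * sI / e)
          ≤ e * (V'.filter fun v : Fin n => (v : ℕ) < g).card := Nat.mul_le_mul_left e hlower
      have hA3 : e * (j1 * sI / e - 1) + e = e * (j1 * sI / e) := by
        rw [← Nat.mul_succ]
        congr 1
        omega
      have hA4 : e * (j1 * sI / e) ≤ j1 * sI := Nat.mul_div_le _ _
      have hA5 : e * ((j1 - 1) * sI / e) + ((j1 - 1) * sI) % e = (j1 - 1) * sI :=
        Nat.div_add_mod _ _
      have hA6 : ((j1 - 1) * sI) % e < e := Nat.mod_lt _ (by omega)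
      have hA7 : j1 * sI = (j1 - 1) * sI + sI := by
        have h1 : (j1 - 1) * sI = j1 * sI - sI := Nat.sub_one_mul j1 sI
        have h2 : sI ≤ j1 * sI := Nat.le_mul_of_pos_left sI (by omega)
        omega
      linarith [hA1, hA2, hA3, hA4, hA5, hA6, hA7, hse]
  · -- all milestones below g
    have hj0I : e - 1 ∈ Finset.Icc 1 (e - 1) := by rw [Finset.mem_Icc]; omega
    have hallg : (μ' (e - 1) : ℕ) < g := by
      by_contra h
      exact hTne ⟨e - 1, Finset.mem_filter.2 ⟨hj0I, h⟩⟩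
    obtain ⟨hμV', hkV'⟩ := hm' (e - 1) hj0I
    have hlower : (e - 1) * sI / e ≤ (V'.filter fun v : Fin n => (v : ℕ) < g).card := by
      rw [← hkV']
      apply card_le_card
      intro v hv
      rw [Finset.mem_filter] at hv ⊢
      refine ⟨hv.1, ?_⟩
      have := Fin.le_def.1 hv.2
      omega
    have hA1 : e * (V.filter fun v : Fin n => (v : ℕ) < g).card ≤ e * sI :=
      Nat.mul_le_mul_left e hVle
    have hA2 : e * ((e - 1) * sI / e)
        ≤ e * (V'.filter fun v : Fin n => (v : ℕ) < g).card := Nat.mul_le_mul_left e hlower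
    have hA5 : e * ((e - 1) * sI / e) + ((e - 1) * sI) % e = (e - 1) * sI :=
      Nat.div_add_mod _ _
    have hA6 : ((e - 1) * sI) % e < e := Nat.mod_lt _ (by omega)
    have hA7 : (e - 1) * sI + sI = e * sI := by
      have h1 : (e - 1) * sI = e * sI - sI := Nat.sub_one_mul e sI
      have h2 : sI ≤ e * sI := Nat.le_mul_of_pos_left sI (by omega)
      omega
    linarith [hA1, hA2, hA5, hA6, hA7, hse]

end St12

namespace St12

variable {n : ℕ}

lemma scnt_refl (S : Finset (Fin n)) (t : ℕ) :
    scnt (Equiv.refl (Fin n)) S t = (S.filter fun v : Fin n => (v : ℕ) < t).card := by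
  unfold scnt
  congr 1

lemma scnt_rev (S : Finset (Fin n)) (t : ℕ) :
    scnt Fin.revPerm S t = (S.filter fun v : Fin n => n - t ≤ (v : ℕ)).card := by
  unfold scnt
  congr 1
  apply Finset.filter_congr
  intro v _
  have hv : (v : ℕ) < n := v.isLt
  simp only [Fin.revPerm_apply, Fin.val_rev, eq_iff_iff]
  omega

lemma scnt_compl (S : Finset (Fin n)) {t : ℕ} (ht : t ≤ n) :
    scnt Fin.revPerm S t + scnt (Equiv.refl (Fin n)) S (n - t) = S.card := by
  classical
  have hmain := Finset.card_filter_add_card_filter_not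
    (s := S) (p := fun v : Fin n => n - t ≤ (v : ℕ))
  have h2 : S.filter (fun v : Fin n => ¬ (n - t ≤ (v : ℕ)))
      = S.filter (fun v : Fin n => (v : ℕ) < n - t) := by
    apply Finset.filter_congr
    intro v _
    have hv : (v : ℕ) < n := v.isLt
    omega
  rw [scnt_rev, scnt_refl, ← h2, hmain]

section Main2

variable (b e : ℕ) (ε : ℝ) (s : ℕ → ℕ) (μ : ℕ → ℕ → Fin n)

lemma Xstep_def (Y : Finset (Fin n)) (i : ℕ) :
    Xstep b e ε s μ Y i = Y ∪ Pset b e ε s μ Y i ∪ Qset b e ε s μ Y i := rfl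

lemma XX_pre (i : ℕ) : ∀ t, t ≤ n →
    UU b e ε s μ (Equiv.refl (Fin n)) i t ≤ scnt (Equiv.refl (Fin n)) (XX b e ε s μ i) t := by
  cases i with
  | zero =>
    intro t ht
    rw [UU_bot]
    exact Nat.zero_le _
  | succ i =>
    intro t ht
    refine le_trans ((Pset_spec b e ε s μ (XX b e ε s μ i) (i + 1)).2.1 t ht) ?_
    refine scnt_subset _ ?_ t
    rw [XX_succ, Xstep_def]
    exact subset_union_left

lemma XX_suf (i : ℕ) : ∀ t, t ≤ n →
    UU b e ε s μ Fin.revPerm i t ≤ scnt Fin.revPerm (XX b e ε s μ i) t := by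
  cases i with
  | zero =>
    intro t ht
    rw [UU_bot]
    exact Nat.zero_le _
  | succ i =>
    intro t ht
    refine le_trans ((Qset_spec b e ε s μ (XX b e ε s μ i) (i + 1)).2.1 t ht) ?_
    refine scnt_subset _ ?_ t
    rw [XX_succ, Xstep_def]

end Main2

end St12

set_option maxHeartbeats 1000000 in
open Finset St12 in
/-- Let `ε > 0` with `1/ε = e ∈ ℕ` and let `n, b` be positive integers. There
is a function `A` mapping each tuple of sizes `(s_1,…,s_b)` with `s_i ≥ 1/ε` and each tuple
of milestone values `(μ_{i,j})_{i∈[b], j∈[1/ε−1]}` to a `b`-tuple `(V_1,…,V_b)` of pairwise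
disjoint subsets of `[n]` with `|V_i| ≤ (1+2ε)·s_i`, such that whenever `(V*_1,…,V*_b)` are
pairwise disjoint subsets of `[n]` with `|V*_i| = s_i` whose milestones are exactly the
`μ_{i,j}` (the `j`-th milestone of `V*` being its `⌊jε|V*|⌋`-th smallest element), the
output satisfies `∪_{i'≤i} V_{i'} ⪰ ∪_{i'≤i} V*_{i'}` for every `i ∈ [b]`. -/
theorem stmt_12 (ε : ℝ) (hε : 0 < ε) (e : ℕ) (he : (e : ℝ) = 1 / ε)
    (n b : ℕ) (hn : 0 < n) (hb : 0 < b) :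
    ∃ A : (ℕ → ℕ) → (ℕ → ℕ → Fin n) → (ℕ → Finset (Fin n)),
      ∀ (s : ℕ → ℕ) (μ : ℕ → ℕ → Fin n),
        (∀ i ∈ Finset.Icc 1 b, e ≤ s i) →
        ((∀ i ∈ Finset.Icc 1 b, ∀ i' ∈ Finset.Icc 1 b, i ≠ i' →
            Disjoint (A s μ i) (A s μ i')) ∧
         (∀ i ∈ Finset.Icc 1 b, ((A s μ i).card : ℝ) ≤ (1 + 2 * ε) * (s i : ℝ)) ∧
         (∀ Vs : ℕ → Finset (Fin n),
            (∀ i ∈ Finset.Icc 1 b, ∀ i' ∈ Finset.Icc 1 b, i ≠ i' →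
              Disjoint (Vs i) (Vs i')) →
            (∀ i ∈ Finset.Icc 1 b, (Vs i).card = s i) →
            (∀ i ∈ Finset.Icc 1 b, ∀ j ∈ Finset.Icc 1 (e - 1),
              μ i j ∈ Vs i ∧
                ((Vs i).filter fun v => v ≤ μ i j).card = ⌊(j : ℝ) * ε * (s i : ℝ)⌋₊) →
            ∀ i ∈ Finset.Icc 1 b,
              Dominates ((Finset.Icc 1 i).biUnion (A s μ))
                ((Finset.Icc 1 i).biUnion Vs))) := by
  classical
  have hene : (e : ℝ) ≠ 0 := by
    rw [he]
    positivity
  have he1 : 1 ≤ e := Nat.one_le_iff_ne_zero.2 (by exact_mod_cast hene)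
  have hεe : ε = 1 / (e : ℝ) := by rw [he, one_div_one_div]
  have hfloor : ∀ (j sv : ℕ), ⌊(j : ℝ) * ε * (sv : ℝ)⌋₊ = j * sv / e := by
    intro j sv
    have h1 : (j : ℝ) * ε * (sv : ℝ) = ((j * sv : ℕ) : ℝ) / ((e : ℕ) : ℝ) := by
      rw [hεe]
      push_cast
      ring
    rw [h1, Nat.floor_div_natCast, Nat.floor_natCast]
  refine ⟨fun s μ i => XX b e ε s μ i \ XX b e ε s μ (i - 1), ?_⟩
  intro s μ hs
  refine ⟨?_, ?_, ?_⟩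
  · -- pairwise disjointness
    have key : ∀ {i i' : ℕ}, i < i' →
        Disjoint (XX b e ε s μ i \ XX b e ε s μ (i - 1))
          (XX b e ε s μ i' \ XX b e ε s μ (i' - 1)) := by
      intro i i' hlt
      rw [Finset.disjoint_left]
      intro v hv hv'
      have h1 : v ∈ XX b e ε s μ i := (Finset.mem_sdiff.1 hv).1
      have h2 : v ∉ XX b e ε s μ (i' - 1) := (Finset.mem_sdiff.1 hv').2
      exact h2 (XX_mono b e ε s μ (by omega) h1)
    intro i _ i' _ hne
    rcases hne.lt_or_gt with h | h
    · exact key h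
    · exact (key h).symm
  · -- cardinality bound
    intro i hi
    rw [Finset.mem_Icc] at hi
    obtain ⟨i0, rfl⟩ : ∃ i0, i = i0 + 1 := ⟨i - 1, by omega⟩
    have hse : e ≤ s (i0 + 1) := hs (i0 + 1) (Finset.mem_Icc.2 hi)
    simp only [Nat.add_sub_cancel]
    obtain ⟨hPdisj, hPpre, hPbound⟩ := Pset_spec b e ε s μ (XX b e ε s μ i0) (i0 + 1)
    obtain ⟨hQdisj, hQsuf, hQbound⟩ := Qset_spec b e ε s μ (XX b e ε s μ i0) (i0 + 1)
    set Y := XX b e ε s μ i0 with hYdef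
    set P := Pset b e ε s μ Y (i0 + 1) with hPdef
    set Q := Qset b e ε s μ Y (i0 + 1) with hQdef
    have hXs : XX b e ε s μ (i0 + 1) = Y ∪ P ∪ Q := by
      rw [XX_succ, Xstep_def]
    have hsub : XX b e ε s μ (i0 + 1) \ Y ⊆ P ∪ Q := by
      intro v hv
      rw [Finset.mem_sdiff, hXs] at hv
      rcases Finset.mem_union.1 hv.1 with h | h
      · rcases Finset.mem_union.1 h with h' | h'
        · exact absurd h' hv.2
        · exact Finset.mem_union_left _ h'
      · exact Finset.mem_union_right _ h
    have hcard1 : (XX b e ε s μ (i0 + 1) \ Y).card ≤ P.card + Q.card :=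
      le_trans (Finset.card_le_card hsub) (Finset.card_union_le _ _)
    have hdef : ∀ t, t ≤ n →
        UU b e ε s μ (Equiv.refl (Fin n)) (i0 + 1) t - scnt (Equiv.refl (Fin n)) Y t
          ≤ uu b e ε s μ (Equiv.refl (Fin n)) (i0 + 1) t := by
      intro t ht
      have h1 := UU_decomp b e ε s μ (Equiv.refl (Fin n)) i0 t
      have h2 := XX_pre b e ε s μ i0 t ht
      rw [← hYdef] at h2
      omega
    obtain ⟨β, hβmem, hβeq⟩ := Finset.exists_mem_eq_sup (Finset.range (n + 1))
      ⟨0, Finset.mem_range.2 (by omega)⟩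
      (fun t' => UU b e ε s μ Fin.revPerm (i0 + 1) t' - scnt Fin.revPerm (Y ∪ P) t')
    have hβn : β ≤ n := by
      have := Finset.mem_range.1 hβmem
      omega
    have hQcard : Q.card
        ≤ UU b e ε s μ Fin.revPerm (i0 + 1) β - scnt Fin.revPerm (Y ∪ P) β := by
      have h1 := hQbound n
      rw [scnt_top Fin.revPerm Q (le_refl n), hβeq] at h1
      exact h1
    have hsplit : scnt Fin.revPerm (Y ∪ P) β = scnt Fin.revPerm Y β + scnt Fin.revPerm P β :=
      scnt_union_of_disjoint _ hPdisj.symm β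
    have hPβ : scnt Fin.revPerm P β + scnt (Equiv.refl (Fin n)) P (n - β) = P.card :=
      scnt_compl P hβn
    have hPn : scnt (Equiv.refl (Fin n)) P (n - β)
        ≤ uu b e ε s μ (Equiv.refl (Fin n)) (i0 + 1) (n - β) := by
      refine le_trans (hPbound (n - β)) ?_
      apply Finset.sup_le
      intro t' ht'
      rw [Finset.mem_range] at ht'
      exact le_trans (hdef t' (by omega))
        (uu_mono b e ε s μ _ (i0 + 1) (by omega : t' ≤ n - β))
    have hsufdec := UU_decomp b e ε s μ Fin.revPerm i0 β
    have hYsuf := XX_suf b e ε s μ i0 β hβn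
    rw [← hYdef] at hYsuf
    have hP2 : P.card ≤ uu b e ε s μ (Equiv.refl (Fin n)) (i0 + 1) n := by
      have h1 := hPbound n
      rw [scnt_top (Equiv.refl (Fin n)) P (le_refl n)] at h1
      refine le_trans h1 ?_
      apply Finset.sup_le
      intro t' ht'
      rw [Finset.mem_range] at ht'
      exact le_trans (hdef t' (by omega)) (uu_mono b e ε s μ _ _ (by omega : t' ≤ n))
    have hkey : (XX b e ε s μ (i0 + 1) \ Y).card
        ≤ uu b e ε s μ Fin.revPerm (i0 + 1) β
          + uu b e ε s μ (Equiv.refl (Fin n)) (i0 + 1) (n - β)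
        ∨ (XX b e ε s μ (i0 + 1) \ Y).card
            ≤ uu b e ε s μ (Equiv.refl (Fin n)) (i0 + 1) n := by
      by_cases htr : scnt Fin.revPerm (Y ∪ P) β ≤ UU b e ε s μ Fin.revPerm (i0 + 1) β
      · left
        omega
      · right
        have hQ0 : Q.card = 0 := by omega
        omega
    by_cases hex : ∃ Vs, valid b e ε s μ Vs
    · obtain ⟨Vs0, hVs0⟩ := hex
      have hi1mem : i0 + 1 ∈ Finset.Icc 1 b := Finset.mem_Icc.2 hi
      have h1 : uu b e ε s μ Fin.revPerm (i0 + 1) β + ll b e ε s μ (i0 + 1) (n - β)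
          ≤ s (i0 + 1) := by
        have ha : uu b e ε s μ Fin.revPerm (i0 + 1) β
            ≤ s (i0 + 1) - ll b e ε s μ (i0 + 1) (n - β) := by
          apply uu_le
          intro Vs hVs
          have hc := scnt_compl (Vs (i0 + 1)) hβn
          have hl := ll_le b e ε s μ hVs (i0 + 1) (n - β)
          have hcd := hVs.2.1 (i0 + 1) hi1mem
          omega
        have hb' : ll b e ε s μ (i0 + 1) (n - β) ≤ s (i0 + 1) := by
          have hl := ll_le b e ε s μ hVs0 (i0 + 1) (n - β)
          have hcd := hVs0.2.1 (i0 + 1) hi1mem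
          have hcc := scnt_le_card (Equiv.refl (Fin n)) (Vs0 (i0 + 1)) (n - β)
          omega
        omega
      have hneim : ((fun Vs => scnt (Equiv.refl (Fin n)) (Vs (i0 + 1)) (n - β)) ''
          {Vs | valid b e ε s μ Vs}).Nonempty := ⟨_, ⟨Vs0, hVs0, rfl⟩⟩
      have hbddim : BddAbove ((fun Vs => scnt (Equiv.refl (Fin n)) (Vs (i0 + 1)) (n - β)) ''
          {Vs | valid b e ε s μ Vs}) := by
        refine ⟨n, ?_⟩
        rintro x ⟨Ws, -, rfl⟩
        exact le_trans (scnt_le_card _ _ _) (card_le_n _)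
      obtain ⟨Vs1, hVs1, heq1⟩ := Nat.sSup_mem hneim hbddim
      obtain ⟨Vs2, hVs2, heq2⟩ := Nat.sInf_mem hneim
      have hVs1' : valid b e ε s μ Vs1 := hVs1
      have hVs2' : valid b e ε s μ Vs2 := hVs2
      have hm1 : ∀ j ∈ Finset.Icc 1 (e - 1), μ (i0 + 1) j ∈ Vs1 (i0 + 1) ∧
          ((Vs1 (i0 + 1)).filter fun v : Fin n => v ≤ μ (i0 + 1) j).card
            = j * s (i0 + 1) / e := by
        intro j hj
        obtain ⟨hmem, hcardeq⟩ := hVs1'.2.2 (i0 + 1) hi1mem j hj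
        exact ⟨hmem, by rw [hcardeq, hfloor]⟩
      have hm2 : ∀ j ∈ Finset.Icc 1 (e - 1), μ (i0 + 1) j ∈ Vs2 (i0 + 1) ∧
          ((Vs2 (i0 + 1)).filter fun v : Fin n => v ≤ μ (i0 + 1) j).card
            = j * s (i0 + 1) / e := by
        intro j hj
        obtain ⟨hmem, hcardeq⟩ := hVs2'.2.2 (i0 + 1) hi1mem j hj
        exact ⟨hmem, by rw [hcardeq, hfloor]⟩
      have hgap := gap_core he1 hse (μ (i0 + 1)) (Vs1 (i0 + 1)) (Vs2 (i0 + 1))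
        (hVs1'.2.1 (i0 + 1) hi1mem) hm1 hm2 (n - β)
      have huupre : uu b e ε s μ (Equiv.refl (Fin n)) (i0 + 1) (n - β)
          = ((Vs1 (i0 + 1)).filter fun v : Fin n => (v : ℕ) < (n - β)).card := by
        rw [← scnt_refl]
        exact heq1.symm
      have hllval : ll b e ε s μ (i0 + 1) (n - β)
          = ((Vs2 (i0 + 1)).filter fun v : Fin n => (v : ℕ) < (n - β)).card := by
        rw [← scnt_refl]
        exact heq2.symm
      have h1R : (uu b e ε s μ Fin.revPerm (i0 + 1) β : ℝ)
          + (ll b e ε s μ (i0 + 1) (n - β) : ℝ) ≤ (s (i0 + 1) : ℝ) := by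
        exact_mod_cast h1
      have hgapR : (e : ℝ) * (uu b e ε s μ (Equiv.refl (Fin n)) (i0 + 1) (n - β) : ℝ)
          ≤ (e : ℝ) * (ll b e ε s μ (i0 + 1) (n - β) : ℝ) + 2 * (s (i0 + 1) : ℝ) := by
        rw [huupre, hllval]
        exact_mod_cast hgap
      have heεR : ε * (e : ℝ) = 1 := by
        rw [hεe]
        field_simp
      have h3 : (uu b e ε s μ (Equiv.refl (Fin n)) (i0 + 1) (n - β) : ℝ)
          ≤ (ll b e ε s μ (i0 + 1) (n - β) : ℝ) + 2 * ε * (s (i0 + 1) : ℝ) := by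
        have h4 := mul_le_mul_of_nonneg_left hgapR hε.le
        have h5 : ε * ((e : ℝ) * (uu b e ε s μ (Equiv.refl (Fin n)) (i0 + 1) (n - β) : ℝ))
            = (uu b e ε s μ (Equiv.refl (Fin n)) (i0 + 1) (n - β) : ℝ) := by
          rw [← mul_assoc, heεR, one_mul]
        have h6 : ε * ((e : ℝ) * (ll b e ε s μ (i0 + 1) (n - β) : ℝ) + 2 * (s (i0 + 1) : ℝ))
            = (ll b e ε s μ (i0 + 1) (n - β) : ℝ) + 2 * ε * (s (i0 + 1) : ℝ) := by
          rw [mul_add, ← mul_assoc, heεR, one_mul]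
          ring
        rw [h5, h6] at h4
        exact h4
      have huun : uu b e ε s μ (Equiv.refl (Fin n)) (i0 + 1) n ≤ s (i0 + 1) := by
        apply uu_le
        intro Vs hVs
        exact le_trans (scnt_le_card _ _ _) (le_of_eq (hVs.2.1 (i0 + 1) hi1mem))
      rcases hkey with hkey | hkey
      · have hkR : ((XX b e ε s μ (i0 + 1) \ Y).card : ℝ)
            ≤ (uu b e ε s μ Fin.revPerm (i0 + 1) β : ℝ)
              + (uu b e ε s μ (Equiv.refl (Fin n)) (i0 + 1) (n - β) : ℝ) := by
          exact_mod_cast hkey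
        nlinarith [hkR, h1R, h3]
      · have hkR : ((XX b e ε s μ (i0 + 1) \ Y).card : ℝ) ≤ (s (i0 + 1) : ℝ) := by
          exact_mod_cast le_trans hkey huun
        have hnn : (0 : ℝ) ≤ (s (i0 + 1) : ℝ) := Nat.cast_nonneg _
        nlinarith [hkR, hnn]
    · have hz : ∀ σ : Equiv.Perm (Fin n), ∀ t, uu b e ε s μ σ (i0 + 1) t = 0 := by
        intro σ t
        refine Nat.le_zero.1 (uu_le b e ε s μ ?_)
        intro Vs hVs
        exact absurd ⟨Vs, hVs⟩ hex
      have hzero : (XX b e ε s μ (i0 + 1) \ Y).card = 0 := by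
        rcases hkey with h | h
        · rw [hz, hz] at h
          omega
        · rw [hz] at h
          omega
      rw [hzero, Nat.cast_zero]
      have h1 : (0 : ℝ) ≤ (s (i0 + 1) : ℝ) := Nat.cast_nonneg _
      have h2 : (0 : ℝ) < 1 + 2 * ε := by linarith
      exact mul_nonneg h2.le h1
  · -- domination
    intro Vs hdisjV hcardV hmilV i hi
    have hVs : valid b e ε s μ Vs := ⟨hdisjV, hcardV, hmilV⟩
    show Dominates ((Finset.Icc 1 i).biUnion
      (fun i' => XX b e ε s μ i' \ XX b e ε s μ (i' - 1))) ((Finset.Icc 1 i).biUnion Vs)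
    rw [XX_biUnion]
    constructor
    · have h1 := le_UU b e ε s μ hVs (Equiv.refl (Fin n)) i n
      have h2 := XX_pre b e ε s μ i n (le_refl n)
      rw [scnt_top (Equiv.refl (Fin n)) _ (le_refl n)] at h1
      rw [scnt_top (Equiv.refl (Fin n)) _ (le_refl n)] at h2
      omega
    · intro h hh
      rw [Finset.mem_Icc] at hh
      constructor
      · have h1 := le_UU b e ε s μ hVs (Equiv.refl (Fin n)) i h
        have h2 := XX_pre b e ε s μ i h hh.2
        rw [scnt_refl] at h1 h2
        omega
      · have h1 := le_UU b e ε s μ hVs Fin.revPerm i h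
        have h2 := XX_suf b e ε s μ i h hh.2
        rw [scnt_rev] at h1 h2
        omega
end

section
/- Let ε > 0 with 1/ε ∈ ℕ, let n be a positive integer, and let Z be a random variable taking values in {1,…,n}. For ℓ ∈ {0,…,1/ε−1} and j ∈ ℕ_0 put a_j(ℓ) = 2^{j/ε + ℓ}. Then there exists ℓ ∈ {0,…,1/ε−1} such that Σ_{j∈ℕ_0} a_j(ℓ)·Pr[(1+ε)·Z ≥ a_j(ℓ)] ≤ 2ε(1+ε)·E[Z]. -/
open MeasureTheory

open scoped Classical in
lemma aux_geom_stmt14 (x : ℝ) (hx : 0 ≤ x) (N : ℕ) :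
    ∑ k ∈ (Finset.range N).filter (fun k => (2:ℝ)^k ≤ x), (2:ℝ)^k ≤ 2*x := by
  set T := (Finset.range N).filter (fun k => (2:ℝ)^k ≤ x) with hT
  rcases T.eq_empty_or_nonempty with h | h
  · rw [h]; simp; linarith
  · set K := T.max' h with hK
    have hKx : (2:ℝ)^K ≤ x := (Finset.mem_filter.mp (T.max'_mem h)).2
    have hsub : T ⊆ Finset.range (K+1) := by
      intro k hk
      exact Finset.mem_range.mpr (Nat.lt_succ_of_le (Finset.le_max' T k hk))
    calc ∑ k ∈ T, (2:ℝ)^k ≤ ∑ k ∈ Finset.range (K+1), (2:ℝ)^k :=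
          Finset.sum_le_sum_of_subset_of_nonneg hsub (by intros; positivity)
      _ = 2^(K+1) - 1 := by
          have h2 := geom_sum_eq (by norm_num : (2:ℝ) ≠ 1) (K+1)
          rw [h2]; ring
      _ ≤ 2 * x := by
          have : (2:ℝ)^(K+1) = 2 * 2^K := by ring
          nlinarith

/-- Let `ε > 0` with `1/ε = e ∈ ℕ`, let `n ≥ 1`, and let `Z` be a random
variable with values in `{1,…,n}`. For `ℓ ∈ {0,…,1/ε−1}` and `j ∈ ℕ₀` put
`a_j(ℓ) = 2^{j/ε + ℓ} = 2^{j·e + ℓ}`. Then there is `ℓ ∈ {0,…,1/ε−1}` with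
`Σ_{j∈ℕ₀} a_j(ℓ)·Pr[(1+ε)·Z ≥ a_j(ℓ)] ≤ 2ε(1+ε)·E[Z]`. -/
theorem stmt_14 {Ω : Type*} [MeasurableSpace Ω] (μ : Measure Ω) [IsProbabilityMeasure μ]
    (ε : ℝ) (hε : 0 < ε) (e : ℕ) (he : (e : ℝ) = 1 / ε)
    (n : ℕ) (hn : 0 < n) (Z : Ω → ℕ) (hmeas : Measurable Z)
    (hZ : ∀ ω, Z ω ∈ Finset.Icc 1 n) :
    ∃ ℓ < e,
      ∑' j : ℕ, (2 : ℝ) ^ (j * e + ℓ) *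
          (μ {ω | (2 : ℝ) ^ (j * e + ℓ) ≤ (1 + ε) * (Z ω : ℝ)}).toReal ≤
        2 * ε * (1 + ε) * ∫ ω, (Z ω : ℝ) ∂μ := by
  classical
  have heε : ε * e = 1 := by
    rw [he]; field_simp
  have he1 : 1 ≤ e := by
    rcases Nat.eq_zero_or_pos e with h | h
    · exfalso; rw [h] at heε; simp at heε
    · exact h
  -- bounds on Z
  have hZ1 : ∀ ω, (1:ℝ) ≤ (Z ω : ℝ) := fun ω => by
    exact_mod_cast (Finset.mem_Icc.mp (hZ ω)).1
  have hZn : ∀ ω, (Z ω : ℝ) ≤ (n:ℝ) := fun ω => by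
    exact_mod_cast (Finset.mem_Icc.mp (hZ ω)).2
  have hZR : Measurable fun ω => (Z ω : ℝ) := by
    exact Measurable.comp (measurable_from_top) hmeas
  -- choose N with (1+ε)*n < 2^N
  obtain ⟨N, hN⟩ := pow_unbounded_of_one_lt ((1+ε)*(n:ℝ)) (by norm_num : (1:ℝ) < 2)
  set f : ℕ → ℝ := fun k => (2:ℝ)^k * (μ {ω | (2:ℝ)^k ≤ (1 + ε) * (Z ω : ℝ)}).toReal with hf
  have hfnonneg : ∀ k, 0 ≤ f k := fun k => by
    apply mul_nonneg (by positivity) ENNReal.toReal_nonneg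
  have hA : ∀ k, MeasurableSet {ω | (2:ℝ)^k ≤ (1 + ε) * (Z ω : ℝ)} := fun k =>
    measurableSet_le measurable_const (measurable_const.mul hZR)
  have hfzero : ∀ k, N ≤ k → f k = 0 := by
    intro k hk
    have : {ω | (2:ℝ)^k ≤ (1 + ε) * (Z ω : ℝ)} = ∅ := by
      ext ω
      simp only [Set.mem_setOf_eq, Set.mem_empty_iff_false, iff_false, not_le]
      calc (1 + ε) * (Z ω : ℝ) ≤ (1+ε) * n := by
            apply mul_le_mul_of_nonneg_left (hZn ω) (by linarith)
        _ < 2^N := hN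
        _ ≤ 2^k := by
            apply pow_le_pow_right₀ (by norm_num) hk
    rw [hf]; simp [this]
  -- integrability
  have hZint : Integrable (fun ω => (Z ω : ℝ)) μ := by
    apply Integrable.mono' (integrable_const (n:ℝ)) hZR.aestronglyMeasurable
    filter_upwards with ω
    rw [Real.norm_eq_abs, abs_of_nonneg (by positivity)]
    exact hZn ω
  -- key bound on the full sum
  have key : ∑ k ∈ Finset.range N, f k ≤ 2*(1+ε) * ∫ ω, (Z ω:ℝ) ∂μ := by
    have hrepr : ∀ k, f k = ∫ ω, Set.indicator {ω | (2:ℝ)^k ≤ (1 + ε) * (Z ω : ℝ)}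
        (fun _ => (2:ℝ)^k) ω ∂μ := by
      intro k
      rw [integral_indicator_const _ (hA k), smul_eq_mul, hf, mul_comm]; rfl
    rw [Finset.sum_congr rfl fun k _ => hrepr k, ← integral_finset_sum]
    · rw [← integral_const_mul]
      apply integral_mono _ (hZint.const_mul (2*(1+ε)))
      · intro ω
        simp only [Pi.zero_apply]
        have hx : (0:ℝ) ≤ (1+ε) * (Z ω : ℝ) := by
          have := hZ1 ω; nlinarith
        have : ∑ k ∈ Finset.range N, Set.indicator {ω | (2:ℝ)^k ≤ (1 + ε) * (Z ω : ℝ)}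
            (fun _ => (2:ℝ)^k) ω
            = ∑ k ∈ (Finset.range N).filter (fun k => (2:ℝ)^k ≤ (1+ε)*(Z ω:ℝ)), (2:ℝ)^k := by
          rw [Finset.sum_filter]
          apply Finset.sum_congr rfl
          intro k _
          rw [Set.indicator_apply]
          simp [Set.mem_setOf_eq]
        rw [this]
        calc _ ≤ 2 * ((1+ε)*(Z ω:ℝ)) := aux_geom_stmt14 _ hx N
          _ = 2*(1+ε) * (Z ω:ℝ) := by ring
      · exact integrable_finset_sum _ (fun k _ => (integrable_const ((2:ℝ)^k)).indicator (hA k))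
    · intro k _
      exact (integrable_const ((2:ℝ)^k)).indicator (hA k)
  -- tsum equals finite sum
  have hS : ∀ ℓ, (∑' j : ℕ, f (j*e+ℓ)) = ∑ j ∈ Finset.range N, f (j*e+ℓ) := by
    intro ℓ
    apply tsum_eq_sum
    intro j hj
    apply hfzero
    have hjN : N ≤ j := le_of_not_gt (fun h => hj (Finset.mem_range.mpr h))
    calc N ≤ j := hjN
      _ ≤ j * e := Nat.le_mul_of_pos_right j (by omega)
      _ ≤ j * e + ℓ := Nat.le_add_right _ _
  -- double sum bound
  have hdouble : ∑ ℓ ∈ Finset.range e, ∑ j ∈ Finset.range N, f (j*e+ℓ)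
      ≤ ∑ k ∈ Finset.range N, f k := by
    have h1 : ∑ ℓ ∈ Finset.range e, ∑ j ∈ Finset.range N, f (j*e+ℓ)
        = ∑ p ∈ (Finset.range e) ×ˢ (Finset.range N), f (p.2*e+p.1) := by
      rw [Finset.sum_product]
    have hinj : Set.InjOn (fun p : ℕ × ℕ => p.2*e+p.1)
        ((Finset.range e) ×ˢ (Finset.range N) : Finset (ℕ × ℕ)) := by
      intro p hp q hq hpq
      simp only [Finset.coe_product, Set.mem_prod, Finset.mem_coe, Finset.mem_range] at hp hq
      simp only at hpq
      have h1 : p.1 = (p.2*e+p.1) % e := by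
        rw [add_comm, Nat.add_mul_mod_self_right, Nat.mod_eq_of_lt hp.1]
      have h2 : q.1 = (q.2*e+q.1) % e := by
        rw [add_comm, Nat.add_mul_mod_self_right, Nat.mod_eq_of_lt hq.1]
      have h3 : p.2 = (p.2*e+p.1) / e := by
        rw [add_comm, Nat.add_mul_div_right _ _ (by omega : 0 < e),
          Nat.div_eq_of_lt hp.1]; omega
      have h4 : q.2 = (q.2*e+q.1) / e := by
        rw [add_comm, Nat.add_mul_div_right _ _ (by omega : 0 < e),
          Nat.div_eq_of_lt hq.1]; omega
      have : p.1 = q.1 := by rw [h1, h2, hpq]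
      have : p.2 = q.2 := by rw [h3, h4, hpq]
      exact Prod.ext ‹p.1 = q.1› this
    have h2 : ∑ p ∈ (Finset.range e) ×ˢ (Finset.range N), f (p.2*e+p.1)
        = ∑ k ∈ ((Finset.range e) ×ˢ (Finset.range N)).image (fun p : ℕ × ℕ => p.2*e+p.1), f k :=
      (Finset.sum_image (fun x hx y hy h => hinj (by exact_mod_cast hx) (by exact_mod_cast hy) h)).symm
    have hsub : ((Finset.range e) ×ˢ (Finset.range N)).image (fun p : ℕ × ℕ => p.2*e+p.1)
        ⊆ Finset.range (N*e) := by
      intro k hk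
      simp only [Finset.mem_image, Finset.mem_product, Finset.mem_range] at hk
      obtain ⟨p, ⟨hp1, hp2⟩, rfl⟩ := hk
      rw [Finset.mem_range]
      calc p.2*e+p.1 < p.2*e + e := by omega
        _ = (p.2+1)*e := by ring
        _ ≤ N*e := Nat.mul_le_mul_right e (by omega)
    have h3 : ∑ k ∈ ((Finset.range e) ×ˢ (Finset.range N)).image (fun p : ℕ × ℕ => p.2*e+p.1), f k
        ≤ ∑ k ∈ Finset.range (N*e), f k :=
      Finset.sum_le_sum_of_subset_of_nonneg hsub (fun k _ _ => hfnonneg k)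
    have h4 : ∑ k ∈ Finset.range (N*e), f k = ∑ k ∈ Finset.range N, f k := by
      symm
      apply Finset.sum_subset
      · apply Finset.range_subset_range.mpr
        exact Nat.le_mul_of_pos_right N (by omega)
      · intro k _ hk
        exact hfzero k (le_of_not_gt (fun h => hk (Finset.mem_range.mpr h)))
    rw [h1, h2]
    rw [h4] at h3
    exact h3
  -- averaging
  by_contra hcon
  push_neg at hcon
  have hlt : ∀ ℓ ∈ Finset.range e, 2*ε*(1+ε) * ∫ ω, (Z ω:ℝ) ∂μ < ∑' j : ℕ, f (j*e+ℓ) := by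
    intro ℓ hℓ
    exact hcon ℓ (Finset.mem_range.mp hℓ)
  have hsumlt : ∑ ℓ ∈ Finset.range e, (2*ε*(1+ε) * ∫ ω, (Z ω:ℝ) ∂μ)
      < ∑ ℓ ∈ Finset.range e, ∑' j : ℕ, f (j*e+ℓ) := by
    apply Finset.sum_lt_sum_of_nonempty ⟨0, Finset.mem_range.mpr (by omega)⟩ hlt
  have hconst : ∑ ℓ ∈ Finset.range e, (2*ε*(1+ε) * ∫ ω, (Z ω:ℝ) ∂μ)
      = 2*(1+ε) * ∫ ω, (Z ω:ℝ) ∂μ := by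
    rw [Finset.sum_const, Finset.card_range, nsmul_eq_mul]
    have : (e:ℝ) * (2*ε*(1+ε)) = 2*(1+ε) * (ε * e) := by ring
    rw [← mul_assoc, this, heε, mul_one]
  have hub : ∑ ℓ ∈ Finset.range e, ∑' j : ℕ, f (j*e+ℓ)
      ≤ 2*(1+ε) * ∫ ω, (Z ω:ℝ) ∂μ := by
    calc ∑ ℓ ∈ Finset.range e, ∑' j : ℕ, f (j*e+ℓ)
        = ∑ ℓ ∈ Finset.range e, ∑ j ∈ Finset.range N, f (j*e+ℓ) :=
          Finset.sum_congr rfl (fun ℓ _ => hS ℓ)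
      _ ≤ ∑ k ∈ Finset.range N, f k := hdouble
      _ ≤ _ := key
  rw [hconst] at hsumlt
  linarith
end
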